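/- arXiv:2209.09190 — 10 statements merged into one kernel-verified Lean document; each statement's English description precedes it below -/
import Mathlib

section
/- Let (Θ, 𝒜, μ) be a σ-finite measure space, π₀ : Θ → [0,∞) measurable, and ℓ₁,…,ℓₙ : Θ → [0,∞) measurable. For j = 1,…,n set Z₋ⱼ = ∫_Θ π₀(θ)∏_{k≠j} ℓ_k(θ) μ(dθ) and Z = ∫_Θ π₀(θ)∏_{k=1}^n ℓ_k(θ) μ(dθ), and assume 0 < Z₋ⱼ < ∞ for every j and 0 < Z < ∞. Fix i ∈ {1,…,n}, set μᵢ = Z / Z₋ᵢ, and assume ∫_Θ ℓᵢ(θ) · π₀(θ)∏_{k=1}^n ℓ_k(θ) μ(dθ) < ∞. Let α₁,…,αₙ ∈ (0,∞), Z_α = Σ_{j=1}^n αⱼ Z₋ⱼ, define the weighted mixture density q(θ) = Z_α^{-1} Σ_{j=1}^n αⱼ π₀(θ)∏_{k≠j} ℓ_k(θ) and the i-th leave-one-out posterior density f₋ᵢ(θ) = Z₋ᵢ^{-1} π₀(θ)∏_{k≠i} ℓ_k(θ). Then the asymptotic-variance integral ∫_{{q>0}} (f₋ᵢ(θ)/q(θ))²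 (ℓᵢ(θ)/μᵢ − 1)² q(θ) μ(dθ) is finite. -/
open MeasureTheory Filter Finset
open scoped ENNReal

/-- **Theorem 1 (weighted form).** Finite asymptotic variance of the mixture
importance-sampling estimator of the leave-one-out predictive density. -/
theorem mixture_asymptotic_variance_finite
    {Θ : Type*} [MeasurableSpace Θ] (μ : Measure Θ) [SigmaFinite μ]
    (n : ℕ) (π₀ : Θ → ℝ) (ℓ : Fin n → Θ → ℝ)
    (hπ₀m : Measurable π₀) (hπ₀ : ∀ θ, 0 ≤ π₀ θ)
    (hℓm : ∀ k, Measurable (ℓ k)) (hℓ : ∀ k θ, 0 ≤ ℓ k θ)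
    (Zm : Fin n → ℝ≥0∞)
    (hZm : ∀ j, Zm j = ∫⁻ θ, ENNReal.ofReal (π₀ θ * ∏ k ∈ Finset.univ.erase j, ℓ k θ) ∂μ)
    (Z : ℝ≥0∞) (hZ : Z = ∫⁻ θ, ENNReal.ofReal (π₀ θ * ∏ k, ℓ k θ) ∂μ)
    (hZmpos : ∀ j, 0 < Zm j) (hZmfin : ∀ j, Zm j < ⊤)
    (hZpos : 0 < Z) (hZfin : Z < ⊤)
    (i : Fin n) (μi : ℝ) (hμi : μi = Z.toReal / (Zm i).toReal)
    (hint : (∫⁻ θ, ENNReal.ofReal (ℓ i θ * (π₀ θ * ∏ k, ℓ k θ)) ∂μ) < ⊤)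
    (α : Fin n → ℝ) (hα : ∀ j, 0 < α j)
    (Zα : ℝ) (hZα : Zα = ∑ j, α j * (Zm j).toReal)
    (q : Θ → ℝ)
    (hq : ∀ θ, q θ = Zα⁻¹ * ∑ j, α j * (π₀ θ * ∏ k ∈ Finset.univ.erase j, ℓ k θ))
    (fmi : Θ → ℝ)
    (hfmi : ∀ θ, fmi θ = ((Zm i).toReal)⁻¹ * (π₀ θ * ∏ k ∈ Finset.univ.erase i, ℓ k θ)) :
    (∫⁻ θ in {θ | 0 < q θ},
      ENNReal.ofReal ((fmi θ / q θ) ^ 2 * (ℓ i θ / μi - 1) ^ 2 * q θ) ∂μ) < ⊤ := by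
  -- basic positivity facts
  have hZmt : 0 < (Zm i).toReal := ENNReal.toReal_pos (hZmpos i).ne' (hZmfin i).ne
  have hZαpos : 0 < Zα := by
    rw [hZα]
    exact Finset.sum_pos (fun j _ => mul_pos (hα j)
      (ENNReal.toReal_pos (hZmpos j).ne' (hZmfin j).ne)) ⟨i, Finset.mem_univ i⟩
  set C : ℝ := Zα / (α i * (Zm i).toReal) with hC
  have hCpos : 0 < C := div_pos hZαpos (mul_pos (hα i) hZmt)
  -- nonnegativity of components
  have hαne : α i ≠ 0 := (hα i).ne'
  have hZmtne : (Zm i).toReal ≠ 0 := hZmt.ne'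
  have hZαne : Zα ≠ 0 := hZαpos.ne'
  have hp : ∀ j θ, 0 ≤ π₀ θ * ∏ k ∈ Finset.univ.erase j, ℓ k θ := fun j θ =>
    mul_nonneg (hπ₀ θ) (Finset.prod_nonneg fun k _ => hℓ k θ)
  have hfminn : ∀ θ, 0 ≤ fmi θ := fun θ => by
    rw [hfmi]; exact mul_nonneg (by positivity) (hp i θ)
  -- fmi ≤ C * q
  have hkey : ∀ θ, fmi θ ≤ C * q θ := by
    intro θ
    have hsum : α i * (π₀ θ * ∏ k ∈ Finset.univ.erase i, ℓ k θ) ≤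
        ∑ j, α j * (π₀ θ * ∏ k ∈ Finset.univ.erase j, ℓ k θ) :=
      Finset.single_le_sum (fun j _ => mul_nonneg (hα j).le (hp j θ)) (Finset.mem_univ i)
    have hCq : C * q θ = (∑ j, α j * (π₀ θ * ∏ k ∈ Finset.univ.erase j, ℓ k θ)) /
        (α i * (Zm i).toReal) := by
      rw [hq, hC, div_mul_eq_mul_div, ← mul_assoc, mul_inv_cancel₀ hZαne, one_mul]
    rw [hCq, hfmi]
    rw [div_eq_mul_inv, mul_inv]
    calc ((Zm i).toReal)⁻¹ * (π₀ θ * ∏ k ∈ Finset.univ.erase i, ℓ k θ)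
        = (α i * (π₀ θ * ∏ k ∈ Finset.univ.erase i, ℓ k θ)) * ((α i)⁻¹ * ((Zm i).toReal)⁻¹) := by
          field_simp
      _ ≤ (∑ j, α j * (π₀ θ * ∏ k ∈ Finset.univ.erase j, ℓ k θ)) * ((α i)⁻¹ * ((Zm i).toReal)⁻¹) := by
          exact mul_le_mul_of_nonneg_right hsum
            (mul_nonneg (inv_nonneg.mpr (hα i).le) (inv_nonneg.mpr hZmt.le))
  -- constants
  set c1 : ℝ := 2 * C * (μi⁻¹) ^ 2 * ((Zm i).toReal)⁻¹ with hc1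
  set c2 : ℝ := 2 * C * ((Zm i).toReal)⁻¹ with hc2
  have hc1nn : 0 ≤ c1 := by positivity
  have hc2nn : 0 ≤ c2 := by positivity
  set B : Θ → ℝ := fun θ => c1 * (ℓ i θ * (π₀ θ * ∏ k, ℓ k θ)) +
      c2 * (π₀ θ * ∏ k ∈ Finset.univ.erase i, ℓ k θ) with hB
  -- pointwise bound on the set
  have hpt : ∀ θ ∈ {θ | 0 < q θ},
      ENNReal.ofReal ((fmi θ / q θ) ^ 2 * (ℓ i θ / μi - 1) ^ 2 * q θ) ≤
        ENNReal.ofReal (B θ) := by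
    intro θ hθ
    have hqθ : 0 < q θ := hθ
    apply ENNReal.ofReal_le_ofReal
    have h1 : (fmi θ / q θ) ^ 2 * (ℓ i θ / μi - 1) ^ 2 * q θ =
        (fmi θ / q θ) * ((ℓ i θ / μi - 1) ^ 2 * fmi θ) := by
      field_simp
    have h2 : fmi θ / q θ ≤ C := (div_le_iff₀ hqθ).mpr (by linarith [hkey θ])
    have h3 : (ℓ i θ / μi - 1) ^ 2 ≤ 2 * (ℓ i θ / μi) ^ 2 + 2 := by
      nlinarith [sq_nonneg (ℓ i θ / μi + 1)]
    have hprod : ∏ k, ℓ k θ = ℓ i θ * ∏ k ∈ Finset.univ.erase i, ℓ k θ :=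
      (Finset.mul_prod_erase Finset.univ (fun k => ℓ k θ) (Finset.mem_univ i)).symm
    have h4 : C * ((2 * (ℓ i θ / μi) ^ 2 + 2) * fmi θ) = B θ := by
      simp only [hB, hfmi, hc1, hc2]
      rw [hprod]
      simp only [div_eq_mul_inv]
      ring
    calc (fmi θ / q θ) ^ 2 * (ℓ i θ / μi - 1) ^ 2 * q θ
        = (fmi θ / q θ) * ((ℓ i θ / μi - 1) ^ 2 * fmi θ) := h1
      _ ≤ C * ((ℓ i θ / μi - 1) ^ 2 * fmi θ) :=
          mul_le_mul_of_nonneg_right h2 (mul_nonneg (sq_nonneg _) (hfminn θ))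
      _ ≤ C * ((2 * (ℓ i θ / μi) ^ 2 + 2) * fmi θ) := by
          apply mul_le_mul_of_nonneg_left _ hCpos.le
          exact mul_le_mul_of_nonneg_right h3 (hfminn θ)
      _ = B θ := h4
  -- measurability
  have hmq : Measurable q := by
    have : q = fun θ => Zα⁻¹ * ∑ j, α j * (π₀ θ * ∏ k ∈ Finset.univ.erase j, ℓ k θ) :=
      funext hq
    rw [this]
    exact measurable_const.mul (Finset.measurable_sum _ fun j _ =>
      (measurable_const.mul (hπ₀m.mul (Finset.measurable_prod _ fun k _ => hℓm k))))
  have hs : MeasurableSet {θ | 0 < q θ} := measurableSet_lt measurable_const hmq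
  have hm1 : Measurable fun θ => ENNReal.ofReal (ℓ i θ * (π₀ θ * ∏ k, ℓ k θ)) :=
    ((hℓm i).mul (hπ₀m.mul (Finset.measurable_prod _ fun k _ => hℓm k))).ennreal_ofReal
  have hm2 : Measurable fun θ =>
      ENNReal.ofReal (π₀ θ * ∏ k ∈ Finset.univ.erase i, ℓ k θ) :=
    (hπ₀m.mul (Finset.measurable_prod _ fun k _ => hℓm k)).ennreal_ofReal
  -- the bound integral is finite
  have hBfin : (∫⁻ θ, ENNReal.ofReal (B θ) ∂μ) < ⊤ := by
    have hBsplit : ∀ θ, ENNReal.ofReal (B θ) =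
        ENNReal.ofReal c1 * ENNReal.ofReal (ℓ i θ * (π₀ θ * ∏ k, ℓ k θ)) +
        ENNReal.ofReal c2 * ENNReal.ofReal (π₀ θ * ∏ k ∈ Finset.univ.erase i, ℓ k θ) := by
      intro θ
      rw [hB]
      rw [ENNReal.ofReal_add (mul_nonneg hc1nn (mul_nonneg (hℓ i θ)
        (mul_nonneg (hπ₀ θ) (Finset.prod_nonneg fun k _ => hℓ k θ))))
        (mul_nonneg hc2nn (hp i θ)),
        ENNReal.ofReal_mul hc1nn, ENNReal.ofReal_mul hc2nn]
    simp only [hBsplit]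
    rw [lintegral_add_left ((hm1.const_mul _)),
      lintegral_const_mul' _ _ ENNReal.ofReal_ne_top,
      lintegral_const_mul' _ _ ENNReal.ofReal_ne_top]
    have h2' : (∫⁻ θ, ENNReal.ofReal (π₀ θ * ∏ k ∈ Finset.univ.erase i, ℓ k θ) ∂μ) < ⊤ := by
      rw [← hZm i]; exact hZmfin i
    exact ENNReal.add_lt_top.mpr ⟨ENNReal.mul_lt_top ENNReal.ofReal_lt_top hint,
      ENNReal.mul_lt_top ENNReal.ofReal_lt_top h2'⟩
  calc (∫⁻ θ in {θ | 0 < q θ},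
        ENNReal.ofReal ((fmi θ / q θ) ^ 2 * (ℓ i θ / μi - 1) ^ 2 * q θ) ∂μ)
      ≤ ∫⁻ θ in {θ | 0 < q θ}, ENNReal.ofReal (B θ) ∂μ :=
        setLIntegral_mono' hs hpt
    _ ≤ ∫⁻ θ, ENNReal.ofReal (B θ) ∂μ := setLIntegral_le_lintegral _ _
    _ < ⊤ := hBfin
end

section
/- Let (Θ, 𝒜, μ) be a σ-finite measure space, π₀ : Θ → [0,∞) measurable, and ℓ₁,…,ℓₙ : Θ → [0,∞) measurable. For j = 1,…,n set Z₋ⱼ = ∫_Θ π₀∏_{k≠j} ℓ_k dμ and Z = ∫_Θ π₀∏_{k=1}^n ℓ_k dμ, and assume 0 < Z₋ⱼ < ∞ for every j and 0 < Z < ∞. Fix i ∈ {1,…,n} and set μᵢ = Z / Z₋ᵢ. Let α₁,…,αₙ ∈ (0,∞), Z_α = Σⱼ αⱼ Z₋ⱼ, πⱼ = αⱼ Z₋ⱼ / Z_α, and define q(θ) = Z_α^{-1} Σⱼ αⱼ π₀(θ)∏_{k≠j} ℓ_k(θ), the leave-one-out posterior density f₋ᵢ(θ) = Z₋ᵢ^{-1}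 π₀(θ)∏_{k≠i} ℓ_k(θ), and the full posterior density f(θ) = Z^{-1} π₀(θ)∏_{k=1}^n ℓ_k(θ). Then ∫_{{q>0}} (f₋ᵢ/q)² (ℓᵢ/μᵢ − 1)² q dμ ≤ πᵢ^{-1} ( 1 + μᵢ^{-1} ∫_Θ ℓᵢ(θ) f(θ) μ(dθ) ). -/
open MeasureTheory Filter Finset
open scoped ENNReal

/-- **Equation (12).** Explicit bound on the relative asymptotic variance of the
mixture importance-sampling estimator of the leave-one-out predictive density. -/
theorem mixture_asymptotic_variance_bound
    {Θ : Type*} [MeasurableSpace Θ] (μ : Measure Θ) [SigmaFinite μ]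
    (n : ℕ) (π₀ : Θ → ℝ) (ℓ : Fin n → Θ → ℝ)
    (hπ₀m : Measurable π₀) (hπ₀ : ∀ θ, 0 ≤ π₀ θ)
    (hℓm : ∀ k, Measurable (ℓ k)) (hℓ : ∀ k θ, 0 ≤ ℓ k θ)
    (Zm : Fin n → ℝ≥0∞)
    (hZm : ∀ j, Zm j = ∫⁻ θ, ENNReal.ofReal (π₀ θ * ∏ k ∈ Finset.univ.erase j, ℓ k θ) ∂μ)
    (Z : ℝ≥0∞) (hZ : Z = ∫⁻ θ, ENNReal.ofReal (π₀ θ * ∏ k, ℓ k θ) ∂μ)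
    (hZmpos : ∀ j, 0 < Zm j) (hZmfin : ∀ j, Zm j < ⊤)
    (hZpos : 0 < Z) (hZfin : Z < ⊤)
    (i : Fin n) (μi : ℝ) (hμi : μi = Z.toReal / (Zm i).toReal)
    (α : Fin n → ℝ) (hα : ∀ j, 0 < α j)
    (Zα : ℝ) (hZα : Zα = ∑ j, α j * (Zm j).toReal)
    (πw : Fin n → ℝ) (hπw : ∀ j, πw j = α j * (Zm j).toReal / Zα)
    (q : Θ → ℝ)
    (hq : ∀ θ, q θ = Zα⁻¹ * ∑ j, α j * (π₀ θ * ∏ k ∈ Finset.univ.erase j, ℓ k θ))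
    (fmi : Θ → ℝ)
    (hfmi : ∀ θ, fmi θ = ((Zm i).toReal)⁻¹ * (π₀ θ * ∏ k ∈ Finset.univ.erase i, ℓ k θ))
    (f : Θ → ℝ)
    (hf : ∀ θ, f θ = (Z.toReal)⁻¹ * (π₀ θ * ∏ k, ℓ k θ)) :
    (∫⁻ θ in {θ | 0 < q θ},
      ENNReal.ofReal ((fmi θ / q θ) ^ 2 * (ℓ i θ / μi - 1) ^ 2 * q θ) ∂μ)
      ≤ ENNReal.ofReal ((πw i)⁻¹) *
        (1 + ENNReal.ofReal (μi⁻¹) * ∫⁻ θ, ENNReal.ofReal (ℓ i θ * f θ) ∂μ) := by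
  have hGm : ∀ j : Fin n, Measurable (fun θ => π₀ θ * ∏ k ∈ Finset.univ.erase j, ℓ k θ) :=
    fun j => hπ₀m.mul (Finset.measurable_prod _ fun k _ => hℓm k)
  have hGnn : ∀ (j : Fin n) θ, 0 ≤ π₀ θ * ∏ k ∈ Finset.univ.erase j, ℓ k θ := fun j θ =>
    mul_nonneg (hπ₀ θ) (Finset.prod_nonneg fun k _ => hℓ k θ)
  have hZmT : ∀ j, 0 < (Zm j).toReal := fun j =>
    ENNReal.toReal_pos (hZmpos j).ne' (hZmfin j).ne
  have hZT : 0 < Z.toReal := ENNReal.toReal_pos hZpos.ne' hZfin.ne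
  have hZαpos : 0 < Zα := by
    rw [hZα]
    exact Finset.sum_pos (fun j _ => mul_pos (hα j) (hZmT j)) ⟨i, Finset.mem_univ i⟩
  have hπwpos : 0 < πw i := by
    rw [hπw]; exact div_pos (mul_pos (hα i) (hZmT i)) hZαpos
  have hμipos : 0 < μi := by rw [hμi]; exact div_pos hZT (hZmT i)
  have hfminn : ∀ θ, 0 ≤ fmi θ := fun θ => by
    rw [hfmi]; exact mul_nonneg (inv_nonneg.2 (hZmT i).le) (hGnn i θ)
  have hfm : Measurable f := by
    have : f = fun θ => (Z.toReal)⁻¹ * (π₀ θ * ∏ k, ℓ k θ) := funext hf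
    rw [this]
    exact measurable_const.mul (hπ₀m.mul (Finset.measurable_prod _ fun k _ => hℓm k))
  have hfnn : ∀ θ, 0 ≤ f θ := fun θ => by
    rw [hf]
    exact mul_nonneg (inv_nonneg.2 hZT.le)
      (mul_nonneg (hπ₀ θ) (Finset.prod_nonneg fun k _ => hℓ k θ))
  -- key pointwise bound: πw i * fmi ≤ q
  have hkey : ∀ θ, πw i * fmi θ ≤ q θ := by
    intro θ
    have h1 : πw i * fmi θ
        = Zα⁻¹ * (α i * (π₀ θ * ∏ k ∈ Finset.univ.erase i, ℓ k θ)) := by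
      have ha : ((Zm i).toReal) ≠ 0 := (hZmT i).ne'
      have hz : Zα ≠ 0 := hZαpos.ne'
      rw [hπw, hfmi]
      field_simp
    have h2 : α i * (π₀ θ * ∏ k ∈ Finset.univ.erase i, ℓ k θ)
        ≤ ∑ j, α j * (π₀ θ * ∏ k ∈ Finset.univ.erase j, ℓ k θ) :=
      Finset.single_le_sum
        (f := fun j => α j * (π₀ θ * ∏ k ∈ Finset.univ.erase j, ℓ k θ))
        (fun j _ => mul_nonneg (hα j).le (hGnn j θ)) (Finset.mem_univ i)
    rw [h1, hq θ]
    exact mul_le_mul_of_nonneg_left h2 (inv_nonneg.2 hZαpos.le)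
  -- pointwise real bound on {q > 0}
  have hpt : ∀ θ ∈ {θ | 0 < q θ},
      ENNReal.ofReal ((fmi θ / q θ) ^ 2 * (ℓ i θ / μi - 1) ^ 2 * q θ) ≤
      ENNReal.ofReal ((πw i)⁻¹ * (fmi θ * (ℓ i θ / μi) ^ 2 + fmi θ)) := by
    intro θ hθ
    have hq0 : 0 < q θ := hθ
    apply ENNReal.ofReal_le_ofReal
    have h1 : fmi θ ^ 2 / q θ ≤ (πw i)⁻¹ * fmi θ := by
      rw [div_le_iff₀ hq0]
      calc fmi θ ^ 2 = (πw i)⁻¹ * fmi θ * (πw i * fmi θ) := by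
            field_simp
        _ ≤ (πw i)⁻¹ * fmi θ * q θ :=
            mul_le_mul_of_nonneg_left (hkey θ)
              (mul_nonneg (inv_nonneg.2 hπwpos.le) (hfminn θ))
    have hy : 0 ≤ ℓ i θ / μi := div_nonneg (hℓ i θ) hμipos.le
    have h2 : (ℓ i θ / μi - 1) ^ 2 ≤ (ℓ i θ / μi) ^ 2 + 1 := by nlinarith
    calc (fmi θ / q θ) ^ 2 * (ℓ i θ / μi - 1) ^ 2 * q θ
        = (fmi θ ^ 2 / q θ) * (ℓ i θ / μi - 1) ^ 2 := by
          field_simp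
      _ ≤ ((πw i)⁻¹ * fmi θ) * ((ℓ i θ / μi) ^ 2 + 1) :=
          mul_le_mul h1 h2 (sq_nonneg _)
            (mul_nonneg (inv_nonneg.2 hπwpos.le) (hfminn θ))
      _ = (πw i)⁻¹ * (fmi θ * (ℓ i θ / μi) ^ 2 + fmi θ) := by ring
  -- identity: fmi * (ℓ i / μi)^2 = μi⁻¹ * (ℓ i * f)
  have hid : ∀ θ, fmi θ * (ℓ i θ / μi) ^ 2 = μi⁻¹ * (ℓ i θ * f θ) := by
    intro θ
    have hprod : ℓ i θ * ∏ k ∈ Finset.univ.erase i, ℓ k θ = ∏ k, ℓ k θ :=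
      Finset.mul_prod_erase Finset.univ (fun k => ℓ k θ) (Finset.mem_univ i)
    have ha : ((Zm i).toReal) ≠ 0 := (hZmT i).ne'
    have hb : Z.toReal ≠ 0 := hZT.ne'
    rw [hfmi, hf, hμi, ← hprod]
    field_simp
  -- ∫ fmi = 1
  have hfmi_int : (∫⁻ θ, ENNReal.ofReal (fmi θ) ∂μ) = 1 := by
    have hpt' : ∀ θ, ENNReal.ofReal (fmi θ)
        = ENNReal.ofReal (((Zm i).toReal)⁻¹)
          * ENNReal.ofReal (π₀ θ * ∏ k ∈ Finset.univ.erase i, ℓ k θ) := by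
      intro θ
      rw [hfmi, ENNReal.ofReal_mul (inv_nonneg.2 (hZmT i).le)]
    simp_rw [hpt']
    rw [lintegral_const_mul' _ _ ENNReal.ofReal_ne_top, ← hZm i,
      ENNReal.ofReal_inv_of_pos (hZmT i), ENNReal.ofReal_toReal (hZmfin i).ne]
    exact ENNReal.inv_mul_cancel (hZmpos i).ne' (hZmfin i).ne
  -- main chain
  calc (∫⁻ θ in {θ | 0 < q θ},
        ENNReal.ofReal ((fmi θ / q θ) ^ 2 * (ℓ i θ / μi - 1) ^ 2 * q θ) ∂μ)
      ≤ ∫⁻ θ in {θ | 0 < q θ},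
          ENNReal.ofReal ((πw i)⁻¹ * (fmi θ * (ℓ i θ / μi) ^ 2 + fmi θ)) ∂μ := by
        refine setLIntegral_mono ?_ hpt
        have hfmim : Measurable fmi := by
          have : fmi = fun θ => ((Zm i).toReal)⁻¹
              * (π₀ θ * ∏ k ∈ Finset.univ.erase i, ℓ k θ) := funext hfmi
          rw [this]; exact measurable_const.mul (hGm i)
        exact Measurable.ennreal_ofReal
          (measurable_const.mul
            ((hfmim.mul (((hℓm i).div_const μi).pow_const 2)).add hfmim))
    _ ≤ ∫⁻ θ, ENNReal.ofReal ((πw i)⁻¹ * (fmi θ * (ℓ i θ / μi) ^ 2 + fmi θ)) ∂μ :=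
        setLIntegral_le_lintegral _ _
    _ = ENNReal.ofReal ((πw i)⁻¹)
        * ∫⁻ θ, ENNReal.ofReal (fmi θ * (ℓ i θ / μi) ^ 2 + fmi θ) ∂μ := by
        simp_rw [ENNReal.ofReal_mul (inv_nonneg.2 hπwpos.le)]
        rw [lintegral_const_mul' _ _ ENNReal.ofReal_ne_top]
    _ = ENNReal.ofReal ((πw i)⁻¹)
        * (1 + ENNReal.ofReal (μi⁻¹) * ∫⁻ θ, ENNReal.ofReal (ℓ i θ * f θ) ∂μ) := by
        congr 1
        have hsplit : ∀ θ, ENNReal.ofReal (fmi θ * (ℓ i θ / μi) ^ 2 + fmi θ)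
            = ENNReal.ofReal (μi⁻¹) * ENNReal.ofReal (ℓ i θ * f θ)
              + ENNReal.ofReal (fmi θ) := by
          intro θ
          rw [ENNReal.ofReal_add (mul_nonneg (hfminn θ) (sq_nonneg _)) (hfminn θ), hid θ,
            ENNReal.ofReal_mul (inv_nonneg.2 hμipos.le)]
        simp_rw [hsplit]
        rw [lintegral_add_left (f := fun θ => ENNReal.ofReal μi⁻¹ * ENNReal.ofReal (ℓ i θ * f θ))
            ((Measurable.ennreal_ofReal ((hℓm i).mul hfm)).const_mul _),
          lintegral_const_mul' _ _ ENNReal.ofReal_ne_top, hfmi_int, add_comm]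
end

section
/- Let X be an n×p real matrix with rows x₁ᵀ,…,xₙᵀ, let Σ be a symmetric positive definite p×p real matrix, let σ > 0, and let H = X(XᵀX + σ²Σ^{-1})^{-1}Xᵀ be the Bayesian hat matrix. Fix i ∈ {1,…,n} and h ∈ (0,1), and set M = XᵀX − h^{-1} xᵢ xᵢᵀ + σ²Σ^{-1}. Then M is positive definite if and only if Hᵢᵢ < h. -/
open Matrix

/-- **Lemma 2 (hii_bayes).** `M = XᵀX − h⁻¹xᵢxᵢᵀ + σ²Σ⁻¹` is positive definite
if and only if the Bayesian leverage `Hᵢᵢ` is strictly less than `h`. -/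
theorem posDef_iff_bayesian_leverage_lt
    (n p : ℕ) (X : Matrix (Fin n) (Fin p) ℝ)
    (S : Matrix (Fin p) (Fin p) ℝ) (hS : S.PosDef)
    (σ : ℝ) (hσ : 0 < σ)
    (H : Matrix (Fin n) (Fin n) ℝ)
    (hH : H = X * (Xᵀ * X + σ ^ 2 • S⁻¹)⁻¹ * Xᵀ)
    (i : Fin n) (h : ℝ) (hh : h ∈ Set.Ioo (0 : ℝ) 1)
    (M : Matrix (Fin p) (Fin p) ℝ)
    (hM : M = Xᵀ * X - h⁻¹ • vecMulVec (X i) (X i) + σ ^ 2 • S⁻¹) :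
    M.PosDef ↔ H i i < h := by
  obtain ⟨hh0, hh1⟩ := hh
  set v : Fin p → ℝ := X i with hv
  set A : Matrix (Fin p) (Fin p) ℝ := Xᵀ * X + σ ^ 2 • S⁻¹ with hAdef
  -- A is positive definite
  have hsm : ((σ ^ 2) • S⁻¹).PosDef := by
    refine Matrix.PosDef.of_dotProduct_mulVec_pos (by simpa [Matrix.IsHermitian] using congrArg ((σ ^ 2) • ·) hS.inv.1)
      fun x hx => ?_
    rw [smul_mulVec, dotProduct_smul]
    exact mul_pos (by positivity) (by simpa using hS.inv.dotProduct_mulVec_pos hx)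
  have hA : A.PosDef := by
    have h1 : (Xᵀ * X).PosSemidef := by simpa using posSemidef_conjTranspose_mul_self X
    exact Matrix.PosDef.posSemidef_add h1 hsm
  have hAT : Aᵀ = A := by simpa using hA.1.eq
  -- quadratic form helpers over ℝ
  have hApos : ∀ y : Fin p → ℝ, y ≠ 0 → 0 < y ⬝ᵥ A *ᵥ y := fun y hy => by
    simpa using hA.dotProduct_mulVec_pos hy
  have hAnn : ∀ y : Fin p → ℝ, 0 ≤ y ⬝ᵥ A *ᵥ y := fun y => by
    rcases eq_or_ne y 0 with rfl | hy
    · simp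
    · exact (hApos y hy).le
  have hsymm : ∀ z y : Fin p → ℝ, z ⬝ᵥ A *ᵥ y = y ⬝ᵥ A *ᵥ z := fun z y => by
    rw [dotProduct_mulVec, ← mulVec_transpose, hAT, dotProduct_comm]
  -- M = A - h⁻¹ • vvᵀ
  have hM' : M = A - h⁻¹ • vecMulVec v v := by rw [hM, hAdef]; abel
  have hW : ∀ y : Fin p → ℝ, (vecMulVec v v) *ᵥ y = (v ⬝ᵥ y) • v := fun y => by
    ext j
    simp only [vecMulVec_apply, mulVec, dotProduct, Pi.smul_apply, smul_eq_mul, Finset.sum_mul]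
    exact Finset.sum_congr rfl (fun k _ => by ring)
  have hq : ∀ y : Fin p → ℝ, y ⬝ᵥ M *ᵥ y = y ⬝ᵥ A *ᵥ y - h⁻¹ * (v ⬝ᵥ y) ^ 2 := fun y => by
    rw [hM', sub_mulVec, dotProduct_sub, smul_mulVec, dotProduct_smul, hW,
      dotProduct_smul, smul_eq_mul, smul_eq_mul, dotProduct_comm v y]
    ring
  -- leverage
  have hiu : IsUnit A.det := hA.isUnit.map (Matrix.detMonoidHom)
  set z : Fin p → ℝ := A⁻¹ *ᵥ v with hz
  have hAz : A *ᵥ z = v := by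
    rw [hz, mulVec_mulVec, Matrix.mul_nonsing_inv _ hiu, one_mulVec]
  have hHii : H i i = v ⬝ᵥ z := by
    rw [hH, hz]
    simp only [Matrix.mul_apply, mulVec, dotProduct, transpose_apply, Finset.sum_mul,
      Finset.mul_sum]
    rw [Finset.sum_comm]
    exact Finset.sum_congr rfl fun j _ => Finset.sum_congr rfl fun k _ => by ring
  have hvz : v ⬝ᵥ z = z ⬝ᵥ A *ᵥ z := by
    nth_rewrite 1 [← hAz]
    rw [dotProduct_comm]
  constructor
  · intro hMpd
    rcases eq_or_ne v 0 with hv0 | hv0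
    · rw [hHii, hv0]; simpa using hh0
    · have hz0 : z ≠ 0 := fun hz0 => hv0 (by rw [← hAz, hz0, mulVec_zero])
      have h1 : 0 < z ⬝ᵥ M *ᵥ z := by simpa using hMpd.dotProduct_mulVec_pos hz0
      rw [hq z, ← hvz, ← hHii] at h1
      have h2 : 0 < H i i := by
        rw [hHii, hvz]; exact hApos z hz0
      have hhinv : h * h⁻¹ = 1 := mul_inv_cancel₀ hh0.ne'
      nlinarith [mul_pos hh0 h1, mul_pos h2 h2]
  · intro hlt
    refine Matrix.PosDef.of_dotProduct_mulVec_pos ?_ fun y hy => ?_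
    · have : Mᵀ = M := by
        rw [hM']
        rw [transpose_sub, hAT, transpose_smul]
        congr 1
        ext a b
        simp [vecMulVec_apply, mul_comm]
      simpa [Matrix.IsHermitian] using this
    · simp only [star_trivial]
      rw [hq y]
      set q : ℝ := y ⬝ᵥ A *ᵥ y with hqd
      set d : ℝ := v ⬝ᵥ y with hdd
      have hqpos : 0 < q := hApos y hy
      -- Cauchy–Schwarz: d² ≤ Hii * q
      have hzy : z ⬝ᵥ A *ᵥ y = d := by
        rw [hsymm z y, hAz, dotProduct_comm]
      have hcs : d ^ 2 ≤ (H i i) * q := by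
        have hw := hAnn (q • z - d • y)
        have hexp : (q • z - d • y) ⬝ᵥ A *ᵥ (q • z - d • y)
            = q ^ 2 * (z ⬝ᵥ A *ᵥ z) - 2 * q * d * (z ⬝ᵥ A *ᵥ y) + d ^ 2 * q := by
          rw [mulVec_sub, mulVec_smul, mulVec_smul, dotProduct_sub, sub_dotProduct,
            sub_dotProduct, dotProduct_smul, dotProduct_smul, smul_dotProduct,
            smul_dotProduct, smul_dotProduct, smul_dotProduct, dotProduct_smul,
            dotProduct_smul, hsymm y z]
          simp only [smul_eq_mul]
          ring
        rw [hexp, hzy, ← hvz, ← hHii] at hw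
        nlinarith
      have hHq : h⁻¹ * (H i i * q) < q := by
        rcases le_or_gt (H i i) 0 with hH0 | hH0
        · have : h⁻¹ * (H i i * q) ≤ 0 := by
            apply mul_nonpos_of_nonneg_of_nonpos (by positivity)
            exact mul_nonpos_of_nonpos_of_nonneg hH0 hqpos.le
          linarith
        · have h1 : h⁻¹ * H i i < 1 := by
            have := mul_lt_mul_of_pos_left hlt (inv_pos.mpr hh0)
            rwa [inv_mul_cancel₀ hh0.ne'] at this
          nlinarith
      have : h⁻¹ * d ^ 2 ≤ h⁻¹ * (H i i * q) :=
        mul_le_mul_of_nonneg_left hcs (by positivity)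
      linarith
end

section
/- Let X be an n×p real matrix with rows x₁ᵀ,…,xₙᵀ, y ∈ ℝⁿ, θ₀ ∈ ℝᵖ, σ > 0, and Σ a symmetric positive definite p×p real matrix. Let H = X(XᵀX + σ²Σ^{-1})^{-1}Xᵀ be the Bayesian hat matrix. Then, for each i ∈ {1,…,n}, the integral ∫_{ℝᵖ} exp{ (yᵢ − xᵢᵀθ)²/σ² − (y − Xθ)ᵀ(y − Xθ)/(2σ²) − (θ − θ₀)ᵀΣ^{-1}(θ − θ₀)/2 } dθ (with respect to Lebesgue measure on ℝᵖ) is finite if and only if Hᵢᵢ < 1/2. -/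
open MeasureTheory Matrix
open scoped ENNReal


lemma int1 {d : ℝ} (hd : 0 < d) (b : ℝ) :
    Integrable (fun t : ℝ => Real.exp (-(d * t ^ 2) / 2 + b * t)) := by
  have h2 : 0 < d / 2 := by linarith
  have h := ((integrable_exp_neg_mul_sq h2).comp_sub_right (b / d)).const_mul
    (Real.exp (b ^ 2 / (2 * d)))
  refine h.congr (Filter.Eventually.of_forall fun t => ?_)
  simp only
  rw [← Real.exp_add]
  congr 1
  field_simp
  ring

lemma diag_iff {p : ℕ} (d b : Fin p → ℝ) (c : ℝ) :
    (∫⁻ u : Fin p → ℝ,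
      ENNReal.ofReal (Real.exp (∑ j, (-(d j * u j ^ 2) / 2 + b j * u j) + c)) < ⊤)
    ↔ ∀ j, 0 < d j := by
  constructor
  · -- contrapositive : if some d k ≤ 0 the integral is ⊤
    intro hfin
    by_contra hne
    push_neg at hne
    obtain ⟨k, hk⟩ := hne
    set s : Fin p → Set ℝ := fun j =>
      if j = k then (if 0 ≤ b k then Set.Ici 0 else Set.Iic (0 : ℝ)) else Set.Icc 0 1 with hs
    have hmeas : ∀ j, MeasurableSet (s j) := by
      intro j; rw [hs]; dsimp only
      split_ifs <;> measurability
    set C : ℝ := ∑ j, (|d j| / 2 + |b j|) with hC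
    have hbound : ∀ u ∈ Set.pi Set.univ s,
        Real.exp (c - C) ≤ Real.exp (∑ j, (-(d j * u j ^ 2) / 2 + b j * u j) + c) := by
      intro u hu
      apply Real.exp_le_exp.2
      have : ∀ j, -(|d j| / 2 + |b j|) ≤ -(d j * u j ^ 2) / 2 + b j * u j := by
        intro j
        have huj := hu j (Set.mem_univ j)
        by_cases hjk : j = k
        · subst hjk
          have h1 : 0 ≤ -(d j * u j ^ 2) / 2 := by
            have : d j * u j ^ 2 ≤ 0 :=
              mul_nonpos_of_nonpos_of_nonneg hk (sq_nonneg _)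
            linarith
          have h2 : 0 ≤ b j * u j := by
            have huj' : u j ∈ (if 0 ≤ b j then Set.Ici (0:ℝ) else Set.Iic 0) := by
              simpa [hs] using huj
            by_cases hbj : 0 ≤ b j
            · rw [if_pos hbj] at huj'
              exact mul_nonneg hbj huj'
            · rw [if_neg hbj] at huj'
              have h4 : b j ≤ 0 := le_of_not_ge hbj
              have h5 : u j ≤ 0 := huj'
              nlinarith
          have h3 : 0 ≤ |d j| / 2 + |b j| := by positivity
          linarith
        · have huj' : u j ∈ Set.Icc (0:ℝ) 1 := by simpa [hs, hjk] using huj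
          obtain ⟨h0, h1⟩ := huj'
          have hu2 : u j ^ 2 ≤ 1 := by nlinarith
          have e1 : -(d j * u j ^ 2) / 2 ≥ -(|d j| / 2) := by
            have : d j * u j ^ 2 ≤ |d j| := by
              calc d j * u j ^ 2 ≤ |d j| * u j ^ 2 :=
                    mul_le_mul_of_nonneg_right (le_abs_self _) (sq_nonneg _)
                _ ≤ |d j| * 1 := mul_le_mul_of_nonneg_left hu2 (abs_nonneg _)
                _ = |d j| := mul_one _
            linarith
          have e2 : b j * u j ≥ -|b j| := by
            have : |b j * u j| ≤ |b j| := by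
              rw [abs_mul]
              calc |b j| * |u j| ≤ |b j| * 1 := by
                    apply mul_le_mul_of_nonneg_left _ (abs_nonneg _)
                    rw [abs_le]; constructor <;> linarith
                _ = |b j| := mul_one _
            have := neg_abs_le (b j * u j)
            linarith
          linarith
      have hsum : -C ≤ ∑ j, (-(d j * u j ^ 2) / 2 + b j * u j) := by
        rw [hC, ← Finset.sum_neg_distrib]
        exact Finset.sum_le_sum fun j _ => this j
      linarith
    have hvol : volume (Set.pi Set.univ s) = ⊤ := by
      rw [volume_pi_pi]
      have : ∀ j, volume (s j) = if j = k then (⊤ : ℝ≥0∞) else 1 := by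
        intro j; rw [hs]; dsimp only
        by_cases hjk : j = k
        · rw [if_pos hjk, if_pos hjk]
          split_ifs with hbj
          · exact Real.volume_Ici
          · exact Real.volume_Iic
        · rw [if_neg hjk, if_neg hjk, Real.volume_Icc]
          norm_num
      simp_rw [this]
      rw [Finset.prod_ite_eq' Finset.univ k fun _ => (⊤ : ℝ≥0∞)]
      simp
    have : (⊤ : ℝ≥0∞) ≤ ∫⁻ u : Fin p → ℝ,
        ENNReal.ofReal (Real.exp (∑ j, (-(d j * u j ^ 2) / 2 + b j * u j) + c)) := by
      calc (⊤ : ℝ≥0∞) = ENNReal.ofReal (Real.exp (c - C)) * volume (Set.pi Set.univ s) := by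
            rw [hvol, ENNReal.mul_top]
            simp [Real.exp_pos]
        _ = ∫⁻ _ in Set.pi Set.univ s, ENNReal.ofReal (Real.exp (c - C)) := by
            rw [setLIntegral_const]
        _ ≤ ∫⁻ u in Set.pi Set.univ s,
              ENNReal.ofReal (Real.exp (∑ j, (-(d j * u j ^ 2) / 2 + b j * u j) + c)) := by
            apply setLIntegral_mono' (MeasurableSet.univ_pi hmeas)
            intro u hu
            exact ENNReal.ofReal_le_ofReal (hbound u hu)
        _ ≤ _ := setLIntegral_le_lintegral _ _
    exact absurd hfin (by simp [top_le_iff.mp this])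
  · intro hd
    have hint : Integrable (fun u : Fin p → ℝ =>
        Real.exp c * ∏ j, Real.exp (-(d j * u j ^ 2) / 2 + b j * u j)) :=
      (Integrable.fintype_prod fun j => int1 (hd j) (b j)).const_mul _
    have heq : ∀ u : Fin p → ℝ,
        Real.exp (∑ j, (-(d j * u j ^ 2) / 2 + b j * u j) + c)
          = Real.exp c * ∏ j, Real.exp (-(d j * u j ^ 2) / 2 + b j * u j) := by
      intro u
      rw [Real.exp_add, Real.exp_sum, mul_comm]
    simp_rw [heq]
    exact hint.lintegral_lt_top
lemma conj_dot {p : ℕ} (N V : Matrix (Fin p) (Fin p) ℝ) (x : Fin p → ℝ) :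
    x ⬝ᵥ (V * N * Vᵀ) *ᵥ x = (Vᵀ *ᵥ x) ⬝ᵥ N *ᵥ (Vᵀ *ᵥ x) := by
  rw [← Matrix.mulVec_mulVec, ← Matrix.mulVec_mulVec, Matrix.dotProduct_mulVec,
    ← Matrix.mulVec_transpose]

lemma quad_lintegral_iff {p : ℕ} (M : Matrix (Fin p) (Fin p) ℝ)
    (hM : M.IsHermitian) (b : Fin p → ℝ) (c : ℝ) :
    (∫⁻ θ : Fin p → ℝ,
        ENNReal.ofReal (Real.exp (-(θ ⬝ᵥ M *ᵥ θ) / 2 + b ⬝ᵥ θ + c)) < ⊤)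
      ↔ M.PosDef := by
  classical
  set U : Matrix (Fin p) (Fin p) ℝ :=
    (Matrix.IsHermitian.eigenvectorUnitary hM : Matrix (Fin p) (Fin p) ℝ) with hU
  set d : Fin p → ℝ := hM.eigenvalues with hd
  have hspec : M = U * diagonal d * Uᵀ := by
    have h := hM.spectral_theorem
    rw [Unitary.conjStarAlgAut_apply, Matrix.star_eq_conjTranspose,
      conjTranspose_eq_transpose_of_trivial] at h
    simpa [RCLike.ofReal_real_eq_id] using h
  have hUUt : U * Uᵀ = 1 := by
    have h := (Matrix.mem_unitaryGroup_iff).mp (Matrix.IsHermitian.eigenvectorUnitary hM).2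
    rwa [Matrix.star_eq_conjTranspose, conjTranspose_eq_transpose_of_trivial] at h
  have hUtU : Uᵀ * U = 1 := by
    have h := (Matrix.mem_unitaryGroup_iff').mp (Matrix.IsHermitian.eigenvectorUnitary hM).2
    rwa [Matrix.star_eq_conjTranspose, conjTranspose_eq_transpose_of_trivial] at h
  have hdet2 : U.det * U.det = 1 := by
    have := congrArg Matrix.det hUUt
    rwa [Matrix.det_mul, Matrix.det_transpose, Matrix.det_one] at this
  have hdet : U.det ≠ 0 := by
    intro h; rw [h, mul_zero] at hdet2; exact zero_ne_one hdet2
  have habs : |U.det| = 1 := by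
    have h1 : |U.det| * |U.det| = 1 := by rw [← abs_mul, hdet2, abs_one]
    nlinarith [abs_nonneg U.det]
  have hmap : Measure.map (Matrix.toLin' U) volume = volume := by
    rw [Real.map_matrix_volume_pi_eq_smul_volume_pi hdet]
    rw [abs_inv, habs]
    norm_num
  have hcont : Continuous fun θ : Fin p → ℝ => -(θ ⬝ᵥ M *ᵥ θ) / 2 + b ⬝ᵥ θ + c := by
    have h1 : Continuous fun θ : Fin p → ℝ => θ ⬝ᵥ M *ᵥ θ := by
      simp only [dotProduct, mulVec]
      exact continuous_finset_sum _ fun j _ => (continuous_apply j).mul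
        (continuous_finset_sum _ fun l _ => continuous_const.mul (continuous_apply l))
    have h2 : Continuous fun θ : Fin p → ℝ => b ⬝ᵥ θ := by
      simp only [dotProduct]
      exact continuous_finset_sum _ fun j _ => continuous_const.mul (continuous_apply j)
    fun_prop
  have hmeas : Measurable fun θ : Fin p → ℝ =>
      ENNReal.ofReal (Real.exp (-(θ ⬝ᵥ M *ᵥ θ) / 2 + b ⬝ᵥ θ + c)) :=
    (ENNReal.measurable_ofReal.comp (Real.measurable_exp.comp hcont.measurable))
  have hlin : Measurable (Matrix.toLin' U) :=
    (LinearMap.continuous_of_finiteDimensional (Matrix.toLin' U)).measurable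
  have hchg : (∫⁻ θ : Fin p → ℝ,
      ENNReal.ofReal (Real.exp (-(θ ⬝ᵥ M *ᵥ θ) / 2 + b ⬝ᵥ θ + c)))
      = ∫⁻ u : Fin p → ℝ,
      ENNReal.ofReal (Real.exp (-((U *ᵥ u) ⬝ᵥ M *ᵥ (U *ᵥ u)) / 2 + b ⬝ᵥ (U *ᵥ u) + c)) := by
    conv_lhs => rw [← hmap]
    rw [lintegral_map hmeas hlin]
    simp_rw [Matrix.toLin'_apply]
  have hQ : ∀ u : Fin p → ℝ, (U *ᵥ u) ⬝ᵥ M *ᵥ (U *ᵥ u) = ∑ j, d j * u j ^ 2 := by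
    intro u
    rw [hspec, conj_dot, Matrix.mulVec_mulVec, hUtU, Matrix.one_mulVec]
    simp [Matrix.mulVec_diagonal, dotProduct]
    exact Finset.sum_congr rfl fun j _ => by ring
  have hB : ∀ u : Fin p → ℝ, b ⬝ᵥ (U *ᵥ u) = (Uᵀ *ᵥ b) ⬝ᵥ u := by
    intro u
    rw [Matrix.dotProduct_mulVec, ← Matrix.mulVec_transpose]
  have hsum : ∀ u : Fin p → ℝ,
      -(∑ j, d j * u j ^ 2) / 2 + (Uᵀ *ᵥ b) ⬝ᵥ u + c
        = ∑ j, (-(d j * u j ^ 2) / 2 + (Uᵀ *ᵥ b) j * u j) + c := by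
    intro u
    have h3 : ∑ j, (-(d j * u j ^ 2) / 2) = -(∑ j, d j * u j ^ 2) / 2 := by
      rw [← Finset.sum_div, Finset.sum_neg_distrib]
    rw [Finset.sum_add_distrib, h3, dotProduct]
  rw [hchg]
  simp_rw [hQ, hB, hsum]
  rw [diag_iff]
  constructor
  · intro h
    refine Matrix.PosDef.of_dotProduct_mulVec_pos hM fun x hx => ?_
    have hw : Uᵀ *ᵥ x ≠ 0 := by
      intro h0
      apply hx
      have : (U * Uᵀ) *ᵥ x = U *ᵥ (Uᵀ *ᵥ x) := (Matrix.mulVec_mulVec _ _ _).symm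
      rw [hUUt, Matrix.one_mulVec, h0, Matrix.mulVec_zero] at this
      exact this
    rw [star_trivial, hspec, conj_dot]
    have hpos : 0 < ∑ j, d j * (Uᵀ *ᵥ x) j ^ 2 := by
      obtain ⟨k, hk⟩ := Function.ne_iff.mp hw
      refine Finset.sum_pos' (fun j _ => mul_nonneg (h j).le (sq_nonneg _)) ⟨k, Finset.mem_univ k, ?_⟩
      exact mul_pos (h k) (sq_pos_of_ne_zero hk)
    calc (0:ℝ) < ∑ j, d j * (Uᵀ *ᵥ x) j ^ 2 := hpos
      _ = (Uᵀ *ᵥ x) ⬝ᵥ diagonal d *ᵥ (Uᵀ *ᵥ x) := by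
          simp [Matrix.mulVec_diagonal, dotProduct]
          exact Finset.sum_congr rfl fun j _ => by ring
  · intro hPD j
    exact hPD.eigenvalues_pos j

-- symmetric cross term
lemma cross_dot {p : ℕ} {N : Matrix (Fin p) (Fin p) ℝ} (hsym : Nᵀ = N)
    (v w : Fin p → ℝ) : v ⬝ᵥ N *ᵥ w = w ⬝ᵥ N *ᵥ v := by
  rw [Matrix.dotProduct_mulVec, ← Matrix.mulVec_transpose, hsym, dotProduct_comm]

lemma posdef_smul_iff {p : ℕ} {c : ℝ} (hc : 0 < c) (N : Matrix (Fin p) (Fin p) ℝ) :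
    (c • N).PosDef ↔ N.PosDef := by
  have hmv : ∀ x : Fin p → ℝ, x ⬝ᵥ (c • N) *ᵥ x = c * (x ⬝ᵥ N *ᵥ x) := fun x => by
    rw [Matrix.smul_mulVec, dotProduct_smul, smul_eq_mul]
  rw [Matrix.posDef_iff_dotProduct_mulVec, Matrix.posDef_iff_dotProduct_mulVec]
  constructor
  · rintro ⟨h1, h2⟩
    refine ⟨?_, fun x hx => ?_⟩
    · have : (c • N)ᴴ = c • Nᴴ := by
        rw [Matrix.conjTranspose_smul, star_trivial]
      rw [Matrix.IsHermitian, this] at h1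
      have := smul_right_injective (Matrix (Fin p) (Fin p) ℝ) hc.ne' h1
      exact this
    · have := h2 hx
      rw [star_trivial, hmv x] at this
      rw [star_trivial]
      nlinarith
  · rintro ⟨h1, h2⟩
    refine ⟨?_, fun x hx => ?_⟩
    · rw [Matrix.IsHermitian, Matrix.conjTranspose_smul, star_trivial, h1.eq]
    · have := h2 hx
      rw [star_trivial] at this
      rw [star_trivial, hmv x]
      nlinarith

lemma quad_vecMulVec {p : ℕ} (x θ : Fin p → ℝ) :
    θ ⬝ᵥ (vecMulVec x x) *ᵥ θ = (x ⬝ᵥ θ) ^ 2 := by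
  simp only [mulVec, dotProduct, vecMulVec_apply, pow_two, Finset.sum_mul_sum]
  simp_rw [Finset.mul_sum]
  exact Finset.sum_congr rfl fun j _ => Finset.sum_congr rfl fun l _ => by ring

lemma posdef_sub_iff {p : ℕ} (A : Matrix (Fin p) (Fin p) ℝ) (hA : A.PosDef)
    (x : Fin p → ℝ) :
    (A - (2:ℝ) • vecMulVec x x).PosDef ↔ x ⬝ᵥ A⁻¹ *ᵥ x < 1 / 2 := by
  have hAsym : Aᵀ = A := by
    have := hA.1
    rwa [Matrix.IsHermitian, conjTranspose_eq_transpose_of_trivial] at this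
  have hdet : IsUnit A.det := hA.det_pos.ne'.isUnit
  set u : Fin p → ℝ := A⁻¹ *ᵥ x with hu
  have hAu : A *ᵥ u = x := by
    rw [hu, Matrix.mulVec_mulVec, Matrix.mul_nonsing_inv _ hdet, Matrix.one_mulVec]
  have hxd : ∀ θ : Fin p → ℝ, x ⬝ᵥ θ = u ⬝ᵥ A *ᵥ θ := by
    intro θ
    conv_lhs => rw [← hAu]
    rw [dotProduct_comm, dotProduct_mulVec, ← Matrix.mulVec_transpose, hAsym, dotProduct_comm]
  have hxu : x ⬝ᵥ u = u ⬝ᵥ A *ᵥ u := hxd u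
  have hquad : ∀ θ : Fin p → ℝ,
      θ ⬝ᵥ (A - (2:ℝ) • vecMulVec x x) *ᵥ θ = θ ⬝ᵥ A *ᵥ θ - 2 * (x ⬝ᵥ θ) ^ 2 := by
    intro θ
    rw [Matrix.sub_mulVec, dotProduct_sub, Matrix.smul_mulVec, dotProduct_smul,
      smul_eq_mul, quad_vecMulVec]
  -- Cauchy–Schwarz : (x ⬝ᵥ θ)^2 ≤ (x ⬝ᵥ u) * (θ ⬝ᵥ A *ᵥ θ)
  have hCS : ∀ θ : Fin p → ℝ, (x ⬝ᵥ θ) ^ 2 ≤ (x ⬝ᵥ u) * (θ ⬝ᵥ A *ᵥ θ) := by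
    intro θ
    by_cases hu0 : u = 0
    · have hx0 : x = 0 := by rw [← hAu, hu0, Matrix.mulVec_zero]
      simp [hx0]
    · set a : ℝ := u ⬝ᵥ A *ᵥ u with ha
      set bb : ℝ := x ⬝ᵥ θ with hbb
      have hapos : 0 < a := by
        have := hA.dotProduct_mulVec_pos hu0
        rwa [star_trivial] at this
      set w : Fin p → ℝ := a • θ - bb • u with hw
      have hwq : 0 ≤ w ⬝ᵥ A *ᵥ w := by
        have := hA.posSemidef.dotProduct_mulVec_nonneg w
        rwa [star_trivial] at this
      have hθAu : θ ⬝ᵥ A *ᵥ u = bb := by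
        rw [hbb, hxd θ]
        exact cross_dot hAsym θ u
      have huAθ : u ⬝ᵥ A *ᵥ θ = bb := by rw [hbb, hxd θ]
      have hexp : w ⬝ᵥ A *ᵥ w = a * (a * (θ ⬝ᵥ A *ᵥ θ) - bb ^ 2) := by
        simp only [hw, Matrix.mulVec_sub, Matrix.mulVec_smul, dotProduct_sub, sub_dotProduct,
          dotProduct_smul, smul_dotProduct, smul_eq_mul]
        rw [hθAu, huAθ, ← ha]
        ring
      rw [hxu]
      nlinarith [hexp, hwq, hapos]
  rw [Matrix.posDef_iff_dotProduct_mulVec]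
  constructor
  · rintro ⟨h1, h2⟩
    by_contra hge
    push_neg at hge
    have hu0 : u ≠ 0 := by
      intro h0
      have e0 : x ⬝ᵥ A⁻¹ *ᵥ x = 0 := by rw [← hu, h0, dotProduct_zero]
      rw [e0] at hge
      norm_num at hge
    have := h2 hu0
    rw [star_trivial, hquad u] at this
    have e1 : x ⬝ᵥ u = x ⬝ᵥ A⁻¹ *ᵥ x := by rw [hu]
    have e2 : (x ⬝ᵥ u) ^ 2 = (x ⬝ᵥ u) * (u ⬝ᵥ A *ᵥ u) := by rw [← hxu]; ring
    have hxu' : x ⬝ᵥ u = u ⬝ᵥ A *ᵥ u := hxu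
    -- value = h - 2h² ≤ 0
    nlinarith [hge, this, hxu', e1]
  · intro hlt
    have hvt : (vecMulVec x x)ᵀ = vecMulVec x x := by
      ext i j
      simp [vecMulVec_apply, mul_comm]
    have hherm : (A - (2:ℝ) • vecMulVec x x).IsHermitian := by
      rw [Matrix.IsHermitian, conjTranspose_eq_transpose_of_trivial, Matrix.transpose_sub,
        Matrix.transpose_smul, hAsym, hvt]
    refine ⟨hherm, fun θ hθ => ?_⟩
    rw [star_trivial, hquad θ]
    have hApos := hA.dotProduct_mulVec_pos hθ
    rw [star_trivial] at hApos
    have hCSθ := hCS θ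
    have e1 : x ⬝ᵥ u = x ⬝ᵥ A⁻¹ *ᵥ x := by rw [hu]
    have hnn : 0 ≤ x ⬝ᵥ u := by
      rw [hxu]
      have := hA.posSemidef.dotProduct_mulVec_nonneg u; rwa [star_trivial] at this
    nlinarith [hCSθ, hApos, hlt, e1, hnn]


/-- **Theorem 2 (analytic core).** For Bayesian linear regression, the Gaussian-type
integral giving (up to constants) the asymptotic variance of the classical posterior
importance-sampling estimator of `p(yᵢ|y₋ᵢ)` is finite if and only if the Bayesian
leverage `Hᵢᵢ` is strictly less than `1/2`. -/
theorem classical_estimator_finite_variance_iff_leverage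
    (n p : ℕ) (X : Matrix (Fin n) (Fin p) ℝ) (y : Fin n → ℝ) (θ₀ : Fin p → ℝ)
    (σ : ℝ) (hσ : 0 < σ)
    (S : Matrix (Fin p) (Fin p) ℝ) (hS : S.PosDef)
    (H : Matrix (Fin n) (Fin n) ℝ)
    (hH : H = X * (Xᵀ * X + σ ^ 2 • S⁻¹)⁻¹ * Xᵀ)
    (i : Fin n) :
    (∫⁻ θ : Fin p → ℝ,
        ENNReal.ofReal (Real.exp ((y i - X i ⬝ᵥ θ) ^ 2 / σ ^ 2
          - ((y - X.mulVec θ) ⬝ᵥ (y - X.mulVec θ)) / (2 * σ ^ 2)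
          - ((θ - θ₀) ⬝ᵥ S⁻¹.mulVec (θ - θ₀)) / 2))) < ⊤
      ↔ H i i < 1 / 2 := by
  classical
  have hσ2 : (0:ℝ) < σ ^ 2 := by positivity
  set A : Matrix (Fin p) (Fin p) ℝ := Xᵀ * X + σ ^ 2 • S⁻¹ with hA
  set W : Matrix (Fin p) (Fin p) ℝ := vecMulVec (X i) (X i) with hW
  set M : Matrix (Fin p) (Fin p) ℝ := (σ ^ 2)⁻¹ • (A - (2:ℝ) • W) with hM
  set b : Fin p → ℝ := (σ ^ 2)⁻¹ • (Xᵀ *ᵥ y) - (2 * y i / σ ^ 2) • X i + S⁻¹ *ᵥ θ₀ with hb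
  set c : ℝ := y i ^ 2 / σ ^ 2 - y ⬝ᵥ y / (2 * σ ^ 2) - θ₀ ⬝ᵥ S⁻¹ *ᵥ θ₀ / 2 with hc
  have hSinv : (S⁻¹)ᵀ = S⁻¹ := by
    have h := hS.inv.1
    rwa [Matrix.IsHermitian, conjTranspose_eq_transpose_of_trivial] at h
  have hXtX : (Xᵀ * X).PosSemidef := by
    have h := Matrix.posSemidef_conjTranspose_mul_self X
    rwa [conjTranspose_eq_transpose_of_trivial] at h
  have hsmulS : ((σ ^ 2) • S⁻¹ : Matrix (Fin p) (Fin p) ℝ).PosDef :=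
    (posdef_smul_iff hσ2 S⁻¹).mpr hS.inv
  have hApos : A.PosDef := Matrix.PosDef.posSemidef_add hXtX hsmulS
  have hAsym : Aᵀ = A := by
    have h := hApos.1
    rwa [Matrix.IsHermitian, conjTranspose_eq_transpose_of_trivial] at h
  have hWt : Wᵀ = W := by
    ext k l
    simp [hW, vecMulVec_apply, mul_comm]
  have hMH : M.IsHermitian := by
    rw [Matrix.IsHermitian, conjTranspose_eq_transpose_of_trivial, hM, Matrix.transpose_smul,
      Matrix.transpose_sub, Matrix.transpose_smul, hAsym, hWt]
  -- pointwise identity for the exponent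
  have hq1 : ∀ θ : Fin p → ℝ, (y - X *ᵥ θ) ⬝ᵥ (y - X *ᵥ θ)
      = y ⬝ᵥ y - 2 * ((Xᵀ *ᵥ y) ⬝ᵥ θ) + θ ⬝ᵥ (Xᵀ * X) *ᵥ θ := by
    intro θ
    have e1 : (X *ᵥ θ) ⬝ᵥ (X *ᵥ θ) = θ ⬝ᵥ (Xᵀ * X) *ᵥ θ := by
      rw [Matrix.dotProduct_mulVec, ← Matrix.mulVec_transpose, Matrix.mulVec_mulVec,
        dotProduct_comm]
    have e2 : y ⬝ᵥ (X *ᵥ θ) = (Xᵀ *ᵥ y) ⬝ᵥ θ := by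
      rw [Matrix.dotProduct_mulVec, ← Matrix.mulVec_transpose]
    have e3 : (X *ᵥ θ) ⬝ᵥ y = (Xᵀ *ᵥ y) ⬝ᵥ θ := by rw [dotProduct_comm]; exact e2
    rw [dotProduct_sub, sub_dotProduct, sub_dotProduct, e1, e2, e3]
    ring
  have hq2 : ∀ θ : Fin p → ℝ, (θ - θ₀) ⬝ᵥ S⁻¹ *ᵥ (θ - θ₀)
      = θ ⬝ᵥ S⁻¹ *ᵥ θ - 2 * (θ ⬝ᵥ S⁻¹ *ᵥ θ₀) + θ₀ ⬝ᵥ S⁻¹ *ᵥ θ₀ := by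
    intro θ
    have e1 : θ₀ ⬝ᵥ S⁻¹ *ᵥ θ = θ ⬝ᵥ S⁻¹ *ᵥ θ₀ := cross_dot hSinv θ₀ θ
    rw [Matrix.mulVec_sub, dotProduct_sub, sub_dotProduct, sub_dotProduct, e1]
    ring
  have hq3 : ∀ θ : Fin p → ℝ, θ ⬝ᵥ M *ᵥ θ
      = (σ ^ 2)⁻¹ * (θ ⬝ᵥ (Xᵀ * X) *ᵥ θ + σ ^ 2 * (θ ⬝ᵥ S⁻¹ *ᵥ θ) - 2 * (X i ⬝ᵥ θ) ^ 2) := by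
    intro θ
    rw [hM, Matrix.smul_mulVec, dotProduct_smul, smul_eq_mul, Matrix.sub_mulVec,
      dotProduct_sub, Matrix.smul_mulVec, dotProduct_smul, smul_eq_mul, hW,
      quad_vecMulVec, hA, Matrix.add_mulVec, dotProduct_add, Matrix.smul_mulVec,
      dotProduct_smul, smul_eq_mul]
    try ring
  have hbθ : ∀ θ : Fin p → ℝ, b ⬝ᵥ θ
      = (σ ^ 2)⁻¹ * ((Xᵀ *ᵥ y) ⬝ᵥ θ) - (2 * y i / σ ^ 2) * (X i ⬝ᵥ θ) + θ ⬝ᵥ S⁻¹ *ᵥ θ₀ := by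
    intro θ
    rw [hb, add_dotProduct, sub_dotProduct, smul_dotProduct, smul_dotProduct, smul_eq_mul,
      smul_eq_mul, dotProduct_comm (S⁻¹ *ᵥ θ₀) θ]
  have hE : ∀ θ : Fin p → ℝ,
      (y i - X i ⬝ᵥ θ) ^ 2 / σ ^ 2
          - ((y - X.mulVec θ) ⬝ᵥ (y - X.mulVec θ)) / (2 * σ ^ 2)
          - ((θ - θ₀) ⬝ᵥ S⁻¹.mulVec (θ - θ₀)) / 2
        = -(θ ⬝ᵥ M *ᵥ θ) / 2 + b ⬝ᵥ θ + c := by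
    intro θ
    show (y i - X i ⬝ᵥ θ) ^ 2 / σ ^ 2 - ((y - X *ᵥ θ) ⬝ᵥ (y - X *ᵥ θ)) / (2 * σ ^ 2)
        - ((θ - θ₀) ⬝ᵥ S⁻¹ *ᵥ (θ - θ₀)) / 2 = -(θ ⬝ᵥ M *ᵥ θ) / 2 + b ⬝ᵥ θ + c
    rw [hq1 θ, hq2 θ, hq3 θ, hbθ θ, hc]
    field_simp
    ring
  have hHii : H i i = X i ⬝ᵥ A⁻¹ *ᵥ X i := by
    rw [hH]
    simp only [Matrix.mul_apply, Matrix.transpose_apply, mulVec, dotProduct]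
    simp_rw [Finset.sum_mul, Finset.mul_sum]
    rw [Finset.sum_comm]
    exact Finset.sum_congr rfl fun m _ => Finset.sum_congr rfl fun l _ => by ring
  simp_rw [hE]
  rw [quad_lintegral_iff M hMH b c, hM, posdef_smul_iff (by positivity : (0:ℝ) < (σ ^ 2)⁻¹),
    hW, posdef_sub_iff A hApos (X i), hHii]
end

section
/- Fix n ∈ ℕ, τ > 0, σ > 0, and c ∈ [0,∞). Let (X_p)_{p≥1} be a sequence of real matrices, X_p of size n×p, such that p^{-1} X_p X_pᵀ → τ² I_n entrywise as p → ∞, and let (ν_p)_{p≥1} be positive reals with p ν_p² → c as p → ∞. Let H^{(p)} = X_p (X_pᵀ X_p + σ² ν_p^{-2} I_p)^{-1} X_pᵀ. Then, for each i ∈ {1,…,n}, the diagonal entry H^{(p)}_{ii} converges to cτ²/(σ² + cτ²) as p → ∞. -/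
open Matrix Filter Topology

lemma posDef_smul_one {m : Type*} [Fintype m] [DecidableEq m] {r : ℝ} (hr : 0 < r) :
    ((r • (1 : Matrix m m ℝ))).PosDef := by
  constructor
  · unfold Matrix.IsHermitian
    simp
  · intro x hx
    exact (Matrix.PosDef.one.smul hr).2 hx

/-- Push-through identity. -/
lemma push_through {n p : ℕ} (X : Matrix (Fin n) (Fin p) ℝ) {l : ℝ} (hl : 0 < l) :
    X * (Xᵀ * X + l • (1 : Matrix (Fin p) (Fin p) ℝ))⁻¹ * Xᵀ
      = (X * Xᵀ + l • (1 : Matrix (Fin n) (Fin n) ℝ))⁻¹ * (X * Xᵀ) := by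
  set M := Xᵀ * X + l • (1 : Matrix (Fin p) (Fin p) ℝ) with hM
  set N := X * Xᵀ + l • (1 : Matrix (Fin n) (Fin n) ℝ) with hN
  have hMpd : M.PosDef := by
    have h1 : (Xᵀ * X).PosSemidef := by
      simpa using Matrix.posSemidef_conjTranspose_mul_self X
    exact Matrix.PosDef.posSemidef_add h1 (posDef_smul_one hl)
  have hNpd : N.PosDef := by
    have h1 : (X * Xᵀ).PosSemidef := by
      simpa using Matrix.posSemidef_self_mul_conjTranspose X
    exact Matrix.PosDef.posSemidef_add h1 (posDef_smul_one hl)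
  have hMu : IsUnit M.det := (Matrix.isUnit_iff_isUnit_det M).mp hMpd.isUnit
  have hNu : IsUnit N.det := (Matrix.isUnit_iff_isUnit_det N).mp hNpd.isUnit
  have comm : N * X = X * M := by
    rw [hM, hN]
    simp [Matrix.add_mul, Matrix.mul_add, Matrix.smul_mul, Matrix.mul_smul, Matrix.mul_assoc]
  have key : X * M⁻¹ = N⁻¹ * X := by
    have h1 : N⁻¹ * (N * X) * M⁻¹ = N⁻¹ * (X * M) * M⁻¹ := by rw [comm]
    rw [← Matrix.mul_assoc, Matrix.nonsing_inv_mul N hNu, Matrix.one_mul] at h1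
    rw [← Matrix.mul_assoc (N⁻¹) X M, Matrix.mul_assoc (N⁻¹ * X) M (M⁻¹),
      Matrix.mul_nonsing_inv M hMu, Matrix.mul_one] at h1
    exact h1
  rw [key, Matrix.mul_assoc]

/-- Rescaled form of the leverage. -/
lemma rescale {n p : ℕ} (X : Matrix (Fin n) (Fin p) ℝ) {l : ℝ} (hl : 0 < l) :
    X * (Xᵀ * X + l • (1 : Matrix (Fin p) (Fin p) ℝ))⁻¹ * Xᵀ
      = (l⁻¹ • (X * Xᵀ) + 1)⁻¹ * (l⁻¹ • (X * Xᵀ)) := by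
  rw [push_through X hl]
  set N := X * Xᵀ + l • (1 : Matrix (Fin n) (Fin n) ℝ) with hN
  have hNpd : N.PosDef := by
    have h1 : (X * Xᵀ).PosSemidef := by
      simpa using Matrix.posSemidef_self_mul_conjTranspose X
    exact Matrix.PosDef.posSemidef_add h1 (posDef_smul_one hl)
  have hNu : IsUnit N.det := (Matrix.isUnit_iff_isUnit_det N).mp hNpd.isUnit
  have hsm : l⁻¹ • (X * Xᵀ) + 1 = l⁻¹ • N := by
    rw [hN, smul_add, smul_smul, inv_mul_cancel₀ hl.ne', one_smul]
  rw [hsm]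
  have h3 : (l⁻¹ • N)⁻¹ = l • N⁻¹ := by
    apply Matrix.inv_eq_right_inv
    rw [Matrix.smul_mul, Matrix.mul_smul, smul_smul, inv_mul_cancel₀ hl.ne', one_smul,
      Matrix.mul_nonsing_inv N hNu]
  rw [h3, Matrix.smul_mul, Matrix.mul_smul, smul_smul, mul_inv_cancel₀ hl.ne', one_smul]

/-- **Proposition 1 (deterministic core, finite `c`).** If `p⁻¹XₚXₚᵀ → τ²Iₙ` entrywise
and `pνₚ² → c`, then each Bayesian leverage `H⁽ᵖ⁾ᵢᵢ` converges to `cτ²/(σ² + cτ²)`. -/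
theorem bayesian_leverage_limit
    (n : ℕ) (τ σ c : ℝ) (hτ : 0 < τ) (hσ : 0 < σ) (hc : 0 ≤ c)
    (X : (p : ℕ) → Matrix (Fin n) (Fin p) ℝ)
    (hX : ∀ a b, Tendsto (fun (p : ℕ) => (p : ℝ)⁻¹ * (X p * (X p)ᵀ) a b) atTop
      (𝓝 ((τ ^ 2 • (1 : Matrix (Fin n) (Fin n) ℝ)) a b)))
    (ν : ℕ → ℝ) (hν : ∀ p, 0 < ν p)
    (hνc : Tendsto (fun (p : ℕ) => (p : ℝ) * (ν p) ^ 2) atTop (𝓝 c))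
    (i : Fin n) :
    Tendsto (fun (p : ℕ) =>
        (X p * ((X p)ᵀ * X p + (σ ^ 2 / (ν p) ^ 2) • (1 : Matrix (Fin p) (Fin p) ℝ))⁻¹
          * (X p)ᵀ) i i)
      atTop (𝓝 (c * τ ^ 2 / (σ ^ 2 + c * τ ^ 2))) := by
  have hσ2 : (0:ℝ) < σ ^ 2 := by positivity
  set F : Matrix (Fin n) (Fin n) ℝ → ℝ := fun M => ((M + 1)⁻¹ * M) i i with hF
  set M₀ : Matrix (Fin n) (Fin n) ℝ := (c * τ ^ 2 / σ ^ 2) • 1 with hM₀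
  set G : ℕ → Matrix (Fin n) (Fin n) ℝ :=
    fun p => ((ν p) ^ 2 / σ ^ 2) • (X p * (X p)ᵀ) with hG
  -- Step 1: eventual equality with F ∘ G
  have heq : ∀ p : ℕ,
      (X p * ((X p)ᵀ * X p + (σ ^ 2 / (ν p) ^ 2) • (1 : Matrix (Fin p) (Fin p) ℝ))⁻¹
          * (X p)ᵀ) i i = F (G p) := by
    intro p
    have hl : 0 < σ ^ 2 / (ν p) ^ 2 := div_pos hσ2 (pow_pos (hν p) 2)
    have hinv : (σ ^ 2 / (ν p) ^ 2)⁻¹ = (ν p) ^ 2 / σ ^ 2 := by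
      field_simp
    rw [rescale (X p) hl, hinv]
  -- Step 2: G tends to M₀
  have hGlim : Tendsto G atTop (𝓝 M₀) := by
    refine tendsto_pi_nhds.mpr ?_
    intro a
    rw [tendsto_pi_nhds]
    intro b
    have h1 : Tendsto (fun p : ℕ => ((p : ℝ) * (ν p) ^ 2 / σ ^ 2)
        * ((p : ℝ)⁻¹ * (X p * (X p)ᵀ) a b)) atTop
        (𝓝 ((c / σ ^ 2) * ((τ ^ 2 • (1 : Matrix (Fin n) (Fin n) ℝ)) a b))) :=
      (hνc.div_const (σ ^ 2)).mul (hX a b)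
    have h2 : (c / σ ^ 2) * ((τ ^ 2 • (1 : Matrix (Fin n) (Fin n) ℝ)) a b) = M₀ a b := by
      rw [hM₀]
      simp only [Matrix.smul_apply, smul_eq_mul]
      ring
    rw [h2] at h1
    refine h1.congr' ?_
    filter_upwards [eventually_ge_atTop 1] with p hp
    have hp0 : (p : ℝ) ≠ 0 := by
      exact_mod_cast Nat.one_le_iff_ne_zero.mp hp
    simp only [hG, Matrix.smul_apply, smul_eq_mul]
    field_simp
  -- Step 3: F is continuous at M₀
  have hdet : (M₀ + 1).det ≠ 0 := by
    have : M₀ + 1 = (c * τ ^ 2 / σ ^ 2 + 1) • (1 : Matrix (Fin n) (Fin n) ℝ) := by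
      rw [hM₀, add_smul, one_smul]
    rw [this]
    have hr : (0:ℝ) < c * τ ^ 2 / σ ^ 2 + 1 := by positivity
    rw [Matrix.det_smul, Matrix.det_one, mul_one]
    positivity
  have hcont : ContinuousAt F M₀ := by
    have hinvc : ContinuousAt Inv.inv (M₀ + 1) := by
      apply continuousAt_matrix_inv
      rw [Ring.inverse_eq_inv']
      exact continuousAt_inv₀ hdet
    have haux : ContinuousAt (fun M : Matrix (Fin n) (Fin n) ℝ => M + 1) M₀ :=
      (continuous_id.add continuous_const).continuousAt
    have haddc : ContinuousAt (fun M : Matrix (Fin n) (Fin n) ℝ => (M + 1)⁻¹) M₀ :=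
      Tendsto.comp hinvc haux
    have hmulc : ContinuousAt (fun M : Matrix (Fin n) (Fin n) ℝ => (M + 1)⁻¹ * M) M₀ :=
      haddc.mul continuousAt_id
    exact ((continuous_apply i).continuousAt.comp
      ((continuous_apply i).continuousAt.comp hmulc))
  -- Step 4: value of F at M₀
  have hval : F M₀ = c * τ ^ 2 / (σ ^ 2 + c * τ ^ 2) := by
    set r : ℝ := c * τ ^ 2 / σ ^ 2 + 1 with hr
    have hrpos : (0:ℝ) < r := by positivity
    have h1 : M₀ + 1 = r • (1 : Matrix (Fin n) (Fin n) ℝ) := by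
      rw [hM₀, hr, add_smul, one_smul]
    have h2 : (r • (1 : Matrix (Fin n) (Fin n) ℝ))⁻¹ = r⁻¹ • 1 := by
      apply Matrix.inv_eq_right_inv
      rw [Matrix.smul_mul, Matrix.mul_smul, Matrix.one_mul, smul_smul,
        mul_inv_cancel₀ hrpos.ne', one_smul]
    rw [hF]
    show ((M₀ + 1)⁻¹ * M₀) i i = _
    rw [h1, h2, hM₀]
    rw [Matrix.smul_mul, Matrix.mul_smul, Matrix.one_mul, smul_smul]
    simp only [Matrix.smul_apply, Matrix.one_apply_eq, smul_eq_mul, mul_one]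
    rw [hr]
    field_simp
    ring
  have : Tendsto (fun p => F (G p)) atTop (𝓝 (F M₀)) := hcont.tendsto.comp hGlim
  rw [hval] at this
  exact this.congr (fun p => (heq p).symm)
end

section
/- Fix n ∈ ℕ and c > 0. Let g₁,…,gₙ : ℝ → [0,∞) be bounded measurable functions, and let (A_p)_{p≥1} be a sequence of symmetric positive definite n×n real matrices with A_p → c I_n entrywise as p → ∞. For a symmetric positive definite n×n matrix A, let φ_A(η) = (2π)^{-n/2}(det A)^{-1/2} exp(−½ ηᵀA^{-1}η) denote the centered Gaussian density on ℝⁿ, and for c > 0 let φ_c(t) = (2πc)^{-1/2} exp(−t²/(2c)) denote the univariate version; integrals are with respect to Lebesgue measure. Then ∫_{ℝⁿ} ∏_{j=1}^n gⱼ(ηⱼ) φ_{A_p}(η) dη → ∏_{j=1}^n ∫_ℝ gⱼ(t) φ_c(t) dt as p → ∞. -/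
open MeasureTheory Matrix Filter Topology

/-- The centered Gaussian density on `ℝᵐ` with covariance matrix `A`. -/
noncomputable def gaussDensity {m : ℕ} (A : Matrix (Fin m) (Fin m) ℝ)
    (η : Fin m → ℝ) : ℝ :=
  (Real.sqrt ((2 * Real.pi) ^ m * A.det))⁻¹ * Real.exp (-(η ⬝ᵥ A⁻¹.mulVec η) / 2)

/-- The centered univariate Gaussian density with variance `c`. -/
noncomputable def gauss1 (c t : ℝ) : ℝ :=
  (Real.sqrt (2 * Real.pi * c))⁻¹ * Real.exp (-(t ^ 2) / (2 * c))

lemma sqrtpow (x : ℝ) (hx : 0 ≤ x) (n : ℕ) : Real.sqrt (x ^ n) = Real.sqrt x ^ n := by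
  calc Real.sqrt (x ^ n) = Real.sqrt ((Real.sqrt x ^ n) ^ 2) := by
        rw [← pow_mul, mul_comm, pow_mul, Real.sq_sqrt hx]
  _ = Real.sqrt x ^ n := Real.sqrt_sq (pow_nonneg (Real.sqrt_nonneg x) n)

lemma gaussDensity_smul_one (n : ℕ) (c : ℝ) (hc : 0 < c) (η : Fin n → ℝ) :
    gaussDensity (c • (1 : Matrix (Fin n) (Fin n) ℝ)) η = ∏ j, gauss1 c (η j) := by
  have hdet : (c • (1 : Matrix (Fin n) (Fin n) ℝ)).det = c ^ n := by
    simp [Matrix.det_smul]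
  have hinv : (c • (1 : Matrix (Fin n) (Fin n) ℝ))⁻¹ = c⁻¹ • 1 := by
    apply Matrix.inv_eq_right_inv
    rw [smul_mul_smul_comm, one_mul, mul_inv_cancel₀ hc.ne', one_smul]
  have hq : η ⬝ᵥ (c⁻¹ • (1 : Matrix (Fin n) (Fin n) ℝ)).mulVec η = c⁻¹ * ∑ j, η j ^ 2 := by
    rw [Matrix.smul_mulVec, Matrix.one_mulVec, dotProduct_smul]
    simp [dotProduct, Finset.mul_sum, sq]
  have hπ : (0:ℝ) ≤ 2 * Real.pi * c := by positivity
  rw [gaussDensity, hdet, hinv, hq, ← mul_pow, sqrtpow _ hπ, ← inv_pow]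
  have hexp : -(c⁻¹ * ∑ j, η j ^ 2) / 2 = ∑ j, -(η j ^ 2) / (2 * c) := by
    rw [← Finset.sum_div, Finset.sum_neg_distrib, neg_div, neg_div, neg_inj]
    rw [inv_mul_eq_div, div_div, mul_comm c 2]
  rw [hexp, Real.exp_sum, ← Fin.prod_const n (Real.sqrt (2 * Real.pi * c))⁻¹,
    ← Finset.prod_mul_distrib]
  exact Finset.prod_congr rfl fun j _ => rfl

lemma quad_lower (n : ℕ) (c : ℝ) (hc : 0 < c) (B : Matrix (Fin n) (Fin n) ℝ)
    (hB : ∀ a b, |B a b - (c⁻¹ • (1 : Matrix (Fin n) (Fin n) ℝ)) a b| ≤ (2*c*(n+1))⁻¹)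
    (η : Fin n → ℝ) : (∑ j, η j ^ 2) / (2*c) ≤ η ⬝ᵥ B.mulVec η := by
  set ε : ℝ := (2*c*(n+1))⁻¹ with hε
  set C : Matrix (Fin n) (Fin n) ℝ := c⁻¹ • 1 with hC
  set S : ℝ := ∑ j, η j ^ 2 with hS
  have hε0 : 0 ≤ ε := by rw [hε]; positivity
  have hS0 : 0 ≤ S := Finset.sum_nonneg fun j _ => sq_nonneg _
  have key : η ⬝ᵥ B.mulVec η =
      c⁻¹ * S + ∑ a, ∑ b, η a * ((B a b - C a b) * η b) := by
    have hCq : η ⬝ᵥ C.mulVec η = c⁻¹ * S := by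
      rw [hC, Matrix.smul_mulVec, Matrix.one_mulVec, dotProduct_smul]
      simp [dotProduct, Finset.mul_sum, sq, hS]
    rw [← hCq]
    simp only [dotProduct, Matrix.mulVec, dotProduct, Finset.mul_sum, ← Finset.sum_add_distrib]
    refine Finset.sum_congr rfl fun a _ => Finset.sum_congr rfl fun b _ => by ring
  have habs : |∑ a, ∑ b, η a * ((B a b - C a b) * η b)| ≤ ε * (↑n * S) := by
    calc |∑ a, ∑ b, η a * ((B a b - C a b) * η b)|
        ≤ ∑ a, |∑ b, η a * ((B a b - C a b) * η b)| := Finset.abs_sum_le_sum_abs _ _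
      _ ≤ ∑ a, ∑ b, |η a * ((B a b - C a b) * η b)| :=
          Finset.sum_le_sum fun a _ => Finset.abs_sum_le_sum_abs _ _
      _ ≤ ∑ a : Fin n, ∑ b : Fin n, ε * ((η a ^ 2 + η b ^ 2) / 2) := by
          refine Finset.sum_le_sum fun a _ => Finset.sum_le_sum fun b _ => ?_
          rw [abs_mul, abs_mul]
          have h2 : |η a| * |η b| ≤ (η a ^ 2 + η b ^ 2) / 2 := by
            nlinarith [sq_nonneg (|η a| - |η b|), sq_abs (η a), sq_abs (η b)]
          calc |η a| * (|B a b - C a b| * |η b|)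
              ≤ |η a| * (ε * |η b|) :=
                mul_le_mul_of_nonneg_left
                  (mul_le_mul_of_nonneg_right (hB a b) (abs_nonneg _)) (abs_nonneg _)
            _ = ε * (|η a| * |η b|) := by ring
            _ ≤ ε * ((η a ^ 2 + η b ^ 2) / 2) := mul_le_mul_of_nonneg_left h2 hε0
      _ = ε * (↑n * S) := by
          simp only [← Finset.mul_sum]
          congr 1
          have e1 : ∀ a : Fin n, ∑ b : Fin n, ((η a ^ 2 + η b ^ 2) / 2)
              = (↑n * η a ^ 2 + S) / 2 := fun a => by
            rw [← Finset.sum_div, Finset.sum_add_distrib, Finset.sum_const,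
              Finset.card_univ, Fintype.card_fin, nsmul_eq_mul, ← hS]
          rw [Finset.sum_congr rfl fun a _ => e1 a, ← Finset.sum_div,
            Finset.sum_add_distrib, Finset.sum_const, Finset.card_univ, Fintype.card_fin,
            nsmul_eq_mul, ← Finset.mul_sum, ← hS]
          ring
  have hεn : ε * ↑n ≤ (2*c)⁻¹ := by
    have h2c : (0:ℝ) < 2*c := by positivity
    have h2cn : (0:ℝ) < 2*c*(↑n+1) := by positivity
    rw [hε, inv_eq_one_div, inv_eq_one_div, div_mul_eq_mul_div, div_le_div_iff₀ h2cn h2c]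
    nlinarith
  have h3 : ε * (↑n * S) ≤ (2*c)⁻¹ * S := by
    rw [← mul_assoc]; exact mul_le_mul_of_nonneg_right hεn hS0
  have hc2 : c⁻¹ * S - (2*c)⁻¹ * S = S / (2*c) := by field_simp; ring
  have h4 := neg_abs_le (∑ a, ∑ b, η a * ((B a b - C a b) * η b))
  linarith [key, habs, h3, hc2]

/-- **Dominated-convergence step of Theorem 4.** If `Aₚ → cIₙ` entrywise, then the
integral of a product of bounded nonnegative functions against the `N(0, Aₚ)` density
converges to the product of the univariate Gaussian integrals. -/
theorem gaussian_product_integral_limit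
    (n : ℕ) (c : ℝ) (hc : 0 < c)
    (g : Fin n → ℝ → ℝ)
    (hgm : ∀ j, Measurable (g j)) (hg0 : ∀ j t, 0 ≤ g j t)
    (hgb : ∀ j, ∃ B, ∀ t, g j t ≤ B)
    (A : ℕ → Matrix (Fin n) (Fin n) ℝ) (hA : ∀ p, (A p).PosDef)
    (hAc : ∀ a b, Tendsto (fun p => A p a b) atTop
      (𝓝 ((c • (1 : Matrix (Fin n) (Fin n) ℝ)) a b))) :
    Tendsto (fun p => ∫ η : Fin n → ℝ, (∏ j, g j (η j)) * gaussDensity (A p) η)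
      atTop (𝓝 (∏ j, ∫ t : ℝ, g j t * gauss1 c t)) := by
  classical
  choose Bd hBd using hgb
  have hBd0 : ∀ j, 0 ≤ Bd j := fun j => le_trans (hg0 j 0) (hBd j 0)
  set Bg : ℝ := ∏ j, Bd j with hBg
  have hBg0 : 0 ≤ Bg := Finset.prod_nonneg fun j _ => hBd0 j
  have hprod_nonneg : ∀ η : Fin n → ℝ, 0 ≤ ∏ j, g j (η j) :=
    fun η => Finset.prod_nonneg fun j _ => hg0 j _
  have hprod_le : ∀ η : Fin n → ℝ, ∏ j, g j (η j) ≤ Bg :=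
    fun η => Finset.prod_le_prod (fun j _ => hg0 j _) (fun j _ => hBd j _)
  set M : Matrix (Fin n) (Fin n) ℝ := c • 1 with hM
  have hdetM : M.det = c ^ n := by simp [hM, Matrix.det_smul]
  have hMinv : M⁻¹ = c⁻¹ • 1 := by
    apply Matrix.inv_eq_right_inv
    rw [hM, smul_mul_smul_comm, one_mul, mul_inv_cancel₀ hc.ne', one_smul]
  have hAt : Tendsto A atTop (𝓝 M) := by
    refine tendsto_pi_nhds.2 ?_
    intro a; rw [tendsto_pi_nhds]; intro b; exact hAc a b
  have hdc : Continuous (fun B : Matrix (Fin n) (Fin n) ℝ => B.det) :=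
    continuous_id.matrix_det
  have hdet : Tendsto (fun p => (A p).det) atTop (𝓝 (c ^ n)) := by
    have := (hdc.tendsto M).comp hAt
    rw [hdetM] at this
    exact this
  have hinv : Tendsto (fun p => (A p)⁻¹) atTop
      (𝓝 (c⁻¹ • (1 : Matrix (Fin n) (Fin n) ℝ))) := by
    have hM0 : M.det ≠ 0 := by rw [hdetM]; positivity
    have hcont : ContinuousAt Inv.inv M := by
      apply continuousAt_matrix_inv
      rw [Ring.inverse_eq_inv']
      exact continuousAt_inv₀ hM0
    have := hcont.tendsto.comp hAt
    rwa [Function.comp_def, hMinv] at this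
  have hlim_eq : (∏ j, ∫ t : ℝ, g j t * gauss1 c t)
      = ∫ η : Fin n → ℝ, (∏ j, g j (η j)) * gaussDensity M η := by
    rw [← MeasureTheory.integral_fintype_prod_eq_prod (ι := Fin n) (fun j t => g j t * gauss1 c t)]
    congr 1
    funext η
    rw [hM, gaussDensity_smul_one n c hc η, Finset.prod_mul_distrib]
  rw [hlim_eq]
  set K : ℝ := (Real.sqrt ((2 * Real.pi) ^ n * (c ^ n / 2)))⁻¹ with hK
  have hK0 : 0 ≤ K := inv_nonneg.2 (Real.sqrt_nonneg _)
  have hqcont : ∀ η : Fin n → ℝ,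
      Continuous (fun B : Matrix (Fin n) (Fin n) ℝ => η ⬝ᵥ B.mulVec η) := fun η =>
    (continuous_const : Continuous fun _ : Matrix (Fin n) (Fin n) ℝ => η).dotProduct
      (continuous_id.matrix_mulVec continuous_const)
  have hdens_nonneg : ∀ (P : Matrix (Fin n) (Fin n) ℝ) (η : Fin n → ℝ),
      0 ≤ gaussDensity P η := fun P η =>
    mul_nonneg (inv_nonneg.2 (Real.sqrt_nonneg _)) (Real.exp_pos _).le
  apply tendsto_integral_filter_of_dominated_convergence
    (fun η : Fin n → ℝ => Bg * (K * ∏ j, Real.exp (-(η j ^ 2) / (4 * c))))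
  · -- measurability
    refine Eventually.of_forall fun p => Measurable.aestronglyMeasurable ?_
    refine Measurable.mul ?_ ?_
    · exact Finset.measurable_prod _ fun j _ => (hgm j).comp (measurable_pi_apply j)
    · have : Continuous (fun η : Fin n → ℝ => gaussDensity (A p) η) := by
        unfold gaussDensity
        refine continuous_const.mul (Real.continuous_exp.comp ?_)
        exact ((continuous_id.dotProduct
          (continuous_const.matrix_mulVec continuous_id)).neg.div_const 2)
      exact this.measurable
  · -- eventual bound
    have ev1 : ∀ᶠ p in atTop, c ^ n / 2 ≤ (A p).det :=
      hdet.eventually ((eventually_gt_nhds (half_lt_self (pow_pos hc n))).mono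
        fun x hx => hx.le)
    have ev2 : ∀ᶠ p in atTop, ∀ a b,
        |(A p)⁻¹ a b - (c⁻¹ • (1 : Matrix (Fin n) (Fin n) ℝ)) a b| ≤ (2*c*(↑n+1))⁻¹ := by
      rw [eventually_all]; intro a; rw [eventually_all]; intro b
      have hcE : Continuous (fun B : Matrix (Fin n) (Fin n) ℝ => B a b) :=
        (continuous_apply b).comp (continuous_apply a)
      have hab : Tendsto (fun p => (A p)⁻¹ a b) atTop
          (𝓝 ((c⁻¹ • (1 : Matrix (Fin n) (Fin n) ℝ)) a b)) :=
        (hcE.tendsto _).comp hinv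
      have hεpos : (0:ℝ) < (2*c*(↑n+1))⁻¹ := by positivity
      rw [Metric.tendsto_nhds] at hab
      exact (hab _ hεpos).mono fun p hp => by rw [Real.dist_eq] at hp; exact hp.le
    filter_upwards [ev1, ev2] with p hdetp hinvp
    refine ae_of_all _ fun η => ?_
    have hF0 : 0 ≤ (∏ j, g j (η j)) * gaussDensity (A p) η :=
      mul_nonneg (hprod_nonneg η) (hdens_nonneg _ η)
    rw [Real.norm_of_nonneg hF0]
    have hdle : gaussDensity (A p) η ≤ K * ∏ j, Real.exp (-(η j ^ 2) / (4 * c)) := by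
      rw [gaussDensity]
      have h1 : (Real.sqrt ((2 * Real.pi) ^ n * (A p).det))⁻¹ ≤ K := by
        rw [hK]
        refine inv_anti₀ (Real.sqrt_pos.2 (by positivity)) ?_
        exact Real.sqrt_le_sqrt (mul_le_mul_of_nonneg_left hdetp (by positivity))
      have h2 : Real.exp (-(η ⬝ᵥ (A p)⁻¹.mulVec η) / 2)
          ≤ ∏ j, Real.exp (-(η j ^ 2) / (4 * c)) := by
        rw [← Real.exp_sum]
        apply Real.exp_le_exp.2
        have hq := quad_lower n c hc ((A p)⁻¹) hinvp η
        have hsum : ∑ j, -(η j ^ 2) / (4 * c) = -((∑ j, η j ^ 2) / (2*c)) / 2 := by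
          rw [← Finset.sum_div, Finset.sum_neg_distrib]
          field_simp
          ring
        rw [hsum]
        linarith [hq]
      exact mul_le_mul h1 h2 (Real.exp_pos _).le hK0
    exact mul_le_mul (hprod_le η) hdle (hdens_nonneg _ η) hBg0
  · -- integrability of the bound
    have hint1 : Integrable (fun t : ℝ => Real.exp (-(t ^ 2) / (4 * c))) := by
      have heq : (fun t : ℝ => Real.exp (-(t ^ 2) / (4 * c)))
          = fun t => Real.exp (-((4*c)⁻¹) * t ^ 2) := by
        funext t
        congr 1
        rw [neg_div, neg_mul, neg_inj, inv_mul_eq_div, div_eq_div_iff (by positivity)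
          (by positivity)]
      rw [heq]
      exact integrable_exp_neg_mul_sq (by positivity)
    have hintn : Integrable (fun η : Fin n → ℝ => ∏ j, Real.exp (-(η j ^ 2) / (4 * c))) :=
      Integrable.fintype_prod (f := fun (_ : Fin n) (t : ℝ) => Real.exp (-(t ^ 2) / (4 * c)))
        fun _ => hint1
    exact (hintn.const_mul K).const_mul Bg
  · -- pointwise convergence
    refine ae_of_all _ fun η => ?_
    refine Tendsto.const_mul _ ?_
    have hgoal : gaussDensity M η = (Real.sqrt ((2 * Real.pi) ^ n * c ^ n))⁻¹ *
        Real.exp (-(η ⬝ᵥ (c⁻¹ • (1 : Matrix (Fin n) (Fin n) ℝ)).mulVec η) / 2) := by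
      rw [gaussDensity, hdetM, hMinv]
    rw [hgoal]
    simp only [gaussDensity]
    have t1 : Tendsto (fun p => (Real.sqrt ((2 * Real.pi) ^ n * (A p).det))⁻¹) atTop
        (𝓝 ((Real.sqrt ((2 * Real.pi) ^ n * c ^ n))⁻¹) ) := by
      have hs : Tendsto (fun p => Real.sqrt ((2 * Real.pi) ^ n * (A p).det)) atTop
          (𝓝 (Real.sqrt ((2 * Real.pi) ^ n * c ^ n))) :=
        (Real.continuous_sqrt.tendsto _).comp (tendsto_const_nhds.mul hdet)
      exact hs.inv₀ (Real.sqrt_pos.2 (by positivity)).ne'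
    have t2 : Tendsto (fun p => Real.exp (-(η ⬝ᵥ (A p)⁻¹.mulVec η) / 2)) atTop
        (𝓝 (Real.exp (-(η ⬝ᵥ (c⁻¹ • (1 : Matrix (Fin n) (Fin n) ℝ)).mulVec η) / 2))) := by
      refine (Real.continuous_exp.tendsto _).comp ?_
      exact (((hqcont η).tendsto _).comp hinv).neg.div_const 2
    exact t1.mul t2
end

section
/- Fix n ≥ 1, c > 0, and i ∈ {1,…,n}. Let g₁,…,gₙ : ℝ → [0,∞) be bounded measurable functions with ∫_ℝ gⱼ(t) φ_c(t) dt > 0 for every j, where φ_c(t) = (2πc)^{-1/2} exp(−t²/(2c)). Let (A_p)_{p≥1} be symmetric positive definite n×n real matrices with A_p → c I_n entrywise. For a symmetric positive definite n×n matrix A, let φ_A(η) = (2π)^{-n/2}(det A)^{-1/2} exp(−½ ηᵀA^{-1}η); integrals are with respect to Lebesgue measure. Then, as p → ∞, [∫_{ℝⁿ} gᵢ(ηᵢ) ∏_{j=1}^n gⱼ(ηⱼ) φ_{A_p}(η) dη] / [∫_{ℝⁿ} ∏_{j=1}^n gⱼ(ηⱼ) φ_{A_p}(η) dη] → [∫_ℝ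 gᵢ(t)² φ_c(t) dt] / [∫_ℝ gᵢ(t) φ_c(t) dt], the denominators being strictly positive for all large p. -/
open MeasureTheory Matrix Filter Topology

lemma smul_one_inv' {n : ℕ} {c : ℝ} (hc : 0 < c) :
    (c • (1 : Matrix (Fin n) (Fin n) ℝ))⁻¹ = c⁻¹ • 1 := by
  apply Matrix.inv_eq_right_inv
  rw [Matrix.smul_mul, Matrix.mul_smul, one_mul, smul_smul, mul_inv_cancel₀ hc.ne', one_smul]

lemma gaussDensity_factor {n : ℕ} {c : ℝ} (hc : 0 < c) (η : Fin n → ℝ) :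
    gaussDensity (c • (1 : Matrix (Fin n) (Fin n) ℝ)) η = ∏ j, gauss1 c (η j) := by
  have h2πc : (0:ℝ) < 2 * Real.pi * c := by positivity
  have hdet : (c • (1 : Matrix (Fin n) (Fin n) ℝ)).det = c ^ n := by
    simp [Matrix.det_smul]
  have hquad : η ⬝ᵥ (c⁻¹ • (1 : Matrix (Fin n) (Fin n) ℝ)).mulVec η
      = c⁻¹ * ∑ j, η j ^ 2 := by
    rw [Matrix.smul_mulVec, Matrix.one_mulVec, dotProduct_smul, smul_eq_mul]
    congr 1
    simp [dotProduct, sq]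
  have hsqrt : Real.sqrt ((2 * Real.pi) ^ n * c ^ n) = (Real.sqrt (2 * Real.pi * c)) ^ n := by
    have h : ((Real.sqrt (2 * Real.pi * c)) ^ n) ^ 2 = (2 * Real.pi * c) ^ n := by
      rw [← pow_mul, mul_comm n 2, pow_mul, Real.sq_sqrt h2πc.le]
    rw [← mul_pow, ← h, Real.sqrt_sq (pow_nonneg (Real.sqrt_nonneg _) _)]
  unfold gaussDensity gauss1
  rw [smul_one_inv' hc, hdet, hquad, hsqrt, Finset.prod_mul_distrib, Finset.prod_const,
    Finset.card_univ, Fintype.card_fin, ← inv_pow, ← Real.exp_sum]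
  congr 1
  rw [Finset.mul_sum, neg_div, Finset.sum_div, ← Finset.sum_neg_distrib]
  congr 1
  apply Finset.sum_congr rfl
  intro j _
  field_simp

lemma quad_lb {n : ℕ} (hn : 1 ≤ n) {c : ℝ} (hc : 0 < c) (M : Matrix (Fin n) (Fin n) ℝ)
    (hM : ∀ a b, |M a b - (c⁻¹ • (1 : Matrix (Fin n) (Fin n) ℝ)) a b| ≤ (2 * c * n)⁻¹)
    (η : Fin n → ℝ) :
    (∑ j, η j ^ 2) / (2 * c) ≤ η ⬝ᵥ M.mulVec η := by
  have hn0 : (0:ℝ) < n := by exact_mod_cast hn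
  set D : Matrix (Fin n) (Fin n) ℝ := c⁻¹ • 1 with hD
  set E : Matrix (Fin n) (Fin n) ℝ := M - D with hE
  set S : ℝ := ∑ j, η j ^ 2 with hS
  have hSpos : 0 ≤ S := Finset.sum_nonneg fun j _ => sq_nonneg _
  have hεpos : (0:ℝ) ≤ (2 * c * n)⁻¹ := by positivity
  have hMdec : M = D + E := by rw [hE]; abel
  have hq : η ⬝ᵥ M.mulVec η = c⁻¹ * S + η ⬝ᵥ E.mulVec η := by
    conv_lhs => rw [hMdec]
    rw [Matrix.add_mulVec, dotProduct_add]
    congr 1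
    rw [hD, Matrix.smul_mulVec, Matrix.one_mulVec, dotProduct_smul, smul_eq_mul]
    congr 1
    simp [dotProduct, sq, hS]
  have h1 : |η ⬝ᵥ E.mulVec η| ≤ (2 * c * n)⁻¹ * (∑ j, |η j|) ^ 2 := by
    have step : ∀ a : Fin n, |η a * (E.mulVec η a)| ≤ |η a| * ((2 * c * n)⁻¹ * ∑ b, |η b|) := by
      intro a
      rw [abs_mul]
      refine mul_le_mul_of_nonneg_left ?_ (abs_nonneg _)
      calc |E.mulVec η a| = |∑ b, E a b * η b| := by
            simp [Matrix.mulVec, dotProduct]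
        _ ≤ ∑ b, |E a b * η b| := Finset.abs_sum_le_sum_abs _ _
        _ ≤ ∑ b, (2 * c * n)⁻¹ * |η b| := by
            refine Finset.sum_le_sum fun b _ => ?_
            rw [abs_mul]
            refine mul_le_mul_of_nonneg_right ?_ (abs_nonneg _)
            simpa [hE, Matrix.sub_apply] using hM a b
        _ = (2 * c * n)⁻¹ * ∑ b, |η b| := by rw [Finset.mul_sum]
    calc |η ⬝ᵥ E.mulVec η| = |∑ a, η a * E.mulVec η a| := by
          simp [dotProduct]
      _ ≤ ∑ a, |η a * E.mulVec η a| := Finset.abs_sum_le_sum_abs _ _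
      _ ≤ ∑ a, |η a| * ((2 * c * n)⁻¹ * ∑ b, |η b|) := Finset.sum_le_sum fun a _ => step a
      _ = (2 * c * n)⁻¹ * (∑ a, |η a|) ^ 2 := by rw [← Finset.sum_mul]; ring
  have h2 : (∑ j, |η j|) ^ 2 ≤ n * S := by
    have := sq_sum_le_card_mul_sum_sq (s := (Finset.univ : Finset (Fin n)))
      (f := fun j => |η j|)
    simpa [Finset.card_univ, sq_abs, hS] using this
  have h3 : (2 * c * n)⁻¹ * (n * S) = S / (2 * c) := by
    field_simp
  have h4 : |η ⬝ᵥ E.mulVec η| ≤ S / (2 * c) := by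
    calc |η ⬝ᵥ E.mulVec η| ≤ (2 * c * n)⁻¹ * (∑ j, |η j|) ^ 2 := h1
      _ ≤ (2 * c * n)⁻¹ * (n * S) := mul_le_mul_of_nonneg_left h2 hεpos
      _ = S / (2 * c) := h3
  have key : c⁻¹ * S = S / (2 * c) + S / (2 * c) := by
    field_simp
    ring
  have := abs_le.mp h4
  rw [hq]
  linarith [this.1]

lemma conv_aux (n : ℕ) (hn : 1 ≤ n) (c : ℝ) (hc : 0 < c)
    (h : Fin n → ℝ → ℝ) (hm : ∀ j, Measurable (h j)) (h0 : ∀ j t, 0 ≤ h j t)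
    (hb : ∀ j, ∃ B, ∀ t, h j t ≤ B)
    (A : ℕ → Matrix (Fin n) (Fin n) ℝ)
    (hAc : ∀ a b, Tendsto (fun p => A p a b) atTop
      (𝓝 ((c • (1 : Matrix (Fin n) (Fin n) ℝ)) a b))) :
    Tendsto (fun p => ∫ η : Fin n → ℝ, (∏ j, h j (η j)) * gaussDensity (A p) η)
      atTop (𝓝 (∏ j, ∫ t : ℝ, h j t * gauss1 c t)) := by
  choose B hB using hb
  have hB0 : ∀ j, 0 ≤ B j := fun j => le_trans (h0 j 0) (hB j 0)
  have hπ := Real.pi_pos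
  have hdetlimval : (0:ℝ) < c ^ n := by positivity
  -- convergence of matrices
  have hAt : Tendsto A atTop (𝓝 (c • (1 : Matrix (Fin n) (Fin n) ℝ))) := by
    exact tendsto_pi_nhds.2 fun a => tendsto_pi_nhds.2 fun b => hAc a b
  have hdetlim : Tendsto (fun p => (A p).det) atTop (𝓝 (c ^ n)) := by
    have hdc : Continuous fun M : Matrix (Fin n) (Fin n) ℝ => M.det :=
      continuous_id.matrix_det
    have := (hdc.tendsto (c • 1)).comp hAt
    simpa [Matrix.det_smul, Function.comp_def] using this
  have hinvlim : Tendsto (fun p => (A p)⁻¹) atTop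
      (𝓝 (c⁻¹ • (1 : Matrix (Fin n) (Fin n) ℝ))) := by
    have hdet1 : (c • (1 : Matrix (Fin n) (Fin n) ℝ)).det ≠ 0 := by
      simp only [Matrix.det_smul, Matrix.det_one, Fintype.card_fin, mul_one]
      positivity
    have hcont : ContinuousAt Inv.inv (c • (1 : Matrix (Fin n) (Fin n) ℝ)) := by
      refine continuousAt_matrix_inv _ ?_
      rw [Ring.inverse_eq_inv']
      exact continuousAt_inv₀ hdet1
    have := hcont.tendsto.comp hAt
    rwa [smul_one_inv' hc] at this
  -- pointwise convergence of densities
  have hptwise : ∀ η : Fin n → ℝ,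
      Tendsto (fun p => gaussDensity (A p) η) atTop
        (𝓝 (gaussDensity (c • (1 : Matrix (Fin n) (Fin n) ℝ)) η)) := by
    intro η
    unfold gaussDensity
    have hqc : Continuous fun M : Matrix (Fin n) (Fin n) ℝ => η ⬝ᵥ M.mulVec η :=
      Continuous.dotProduct continuous_const
        (continuous_id.matrix_mulVec continuous_const)
    have hqlim : Tendsto (fun p => η ⬝ᵥ ((A p)⁻¹).mulVec η) atTop
        (𝓝 (η ⬝ᵥ ((c • (1 : Matrix (Fin n) (Fin n) ℝ))⁻¹).mulVec η)) := by
      rw [smul_one_inv' hc]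
      exact (hqc.tendsto _).comp hinvlim
    have hsq : Tendsto (fun p => (Real.sqrt ((2 * Real.pi) ^ n * (A p).det))⁻¹) atTop
        (𝓝 ((Real.sqrt ((2 * Real.pi) ^ n * (c • (1 : Matrix (Fin n) (Fin n) ℝ)).det))⁻¹)) := by
      have hd : (c • (1 : Matrix (Fin n) (Fin n) ℝ)).det = c ^ n := by simp [Matrix.det_smul]
      have h1 : Tendsto (fun p => Real.sqrt ((2 * Real.pi) ^ n * (A p).det)) atTop
          (𝓝 (Real.sqrt ((2 * Real.pi) ^ n * c ^ n))) :=
        (Real.continuous_sqrt.tendsto _).comp (hdetlim.const_mul _)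
      have hne : Real.sqrt ((2 * Real.pi) ^ n * c ^ n) ≠ 0 := by
        refine ne_of_gt (Real.sqrt_pos.2 ?_)
        positivity
      rw [hd]
      exact ((continuousAt_inv₀ hne).tendsto).comp h1
    exact hsq.mul (((Real.continuous_exp.tendsto _).comp (hqlim.neg.div_const 2)))
  -- eventual bounds
  have hev1 : ∀ᶠ p in atTop, ∀ a b,
      |(A p)⁻¹ a b - (c⁻¹ • (1 : Matrix (Fin n) (Fin n) ℝ)) a b| ≤ (2 * c * n)⁻¹ := by
    rw [eventually_all]
    intro a
    rw [eventually_all]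
    intro b
    have hεpos : (0:ℝ) < (2 * c * n)⁻¹ := by
      have hn0 : (0:ℝ) < n := by exact_mod_cast hn
      positivity
    have htab : Tendsto (fun p => (A p)⁻¹ a b) atTop
        (𝓝 ((c⁻¹ • (1 : Matrix (Fin n) (Fin n) ℝ)) a b)) := by
      have : Continuous fun M : Matrix (Fin n) (Fin n) ℝ => M a b :=
        continuous_id.matrix_elem a b
      exact (this.tendsto _).comp hinvlim
    have := (Metric.tendsto_nhds.mp htab) _ hεpos
    filter_upwards [this] with p hp
    rw [Real.dist_eq] at hp
    exact hp.le
  have hev2 : ∀ᶠ p in atTop, c ^ n / 2 < (A p).det :=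
    hdetlim.eventually (eventually_gt_nhds (by linarith))
  -- the dominating function
  set K : ℝ := (Real.sqrt ((2 * Real.pi) ^ n * (c ^ n / 2)))⁻¹ with hK
  have hKpos : 0 < K := by
    rw [hK]
    refine inv_pos.2 (Real.sqrt_pos.2 ?_)
    positivity
  set bound : (Fin n → ℝ) → ℝ :=
    fun η => ((∏ j, B j) * K) * ∏ j, Real.exp (-(4 * c)⁻¹ * η j ^ 2) with hbound
  have hbound_int : Integrable bound := by
    refine Integrable.const_mul ?_ _
    exact Integrable.fintype_prod fun j => integrable_exp_neg_mul_sq (by positivity)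
  -- measurability
  have hmeas : ∀ p : ℕ, AEStronglyMeasurable
      (fun η : Fin n → ℝ => (∏ j, h j (η j)) * gaussDensity (A p) η) volume := by
    intro p
    refine (Measurable.mul ?_ ?_).aestronglyMeasurable
    · exact Finset.measurable_prod _ fun j _ => (hm j).comp (measurable_pi_apply j)
    · unfold gaussDensity
      have hqc : Continuous fun η : Fin n → ℝ => η ⬝ᵥ ((A p)⁻¹).mulVec η :=
        Continuous.dotProduct continuous_id
          (continuous_const.matrix_mulVec continuous_id)
      exact (continuous_const.mul
        (Real.continuous_exp.comp (hqc.neg.div_const 2))).measurable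
  -- bound
  have h_bound : ∀ᶠ p in atTop, ∀ᵐ η : Fin n → ℝ,
      ‖(∏ j, h j (η j)) * gaussDensity (A p) η‖ ≤ bound η := by
    filter_upwards [hev1, hev2] with p hp1 hp2
    refine ae_of_all _ fun η => ?_
    have hg0 : 0 ≤ gaussDensity (A p) η := by
      unfold gaussDensity
      positivity
    have hprod0 : 0 ≤ ∏ j, h j (η j) := Finset.prod_nonneg fun j _ => h0 j _
    rw [Real.norm_eq_abs, abs_of_nonneg (mul_nonneg hprod0 hg0)]
    have hgb : gaussDensity (A p) η ≤ K * ∏ j, Real.exp (-(4 * c)⁻¹ * η j ^ 2) := by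
      unfold gaussDensity
      have hsqle : (Real.sqrt ((2 * Real.pi) ^ n * (A p).det))⁻¹ ≤ K := by
        rw [hK]
        refine inv_anti₀ (Real.sqrt_pos.2 (by positivity)) ?_
        refine Real.sqrt_le_sqrt ?_
        have : (0:ℝ) < (2 * Real.pi) ^ n := by positivity
        nlinarith [hp2, this]
      have hexple : Real.exp (-(η ⬝ᵥ ((A p)⁻¹).mulVec η) / 2)
          ≤ ∏ j, Real.exp (-(4 * c)⁻¹ * η j ^ 2) := by
        rw [← Real.exp_sum]
        refine Real.exp_le_exp.2 ?_
        have hq := quad_lb hn hc ((A p)⁻¹) hp1 η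
        have heq : ∑ j, -(4 * c)⁻¹ * η j ^ 2 = -((∑ j, η j ^ 2) / (2 * c)) / 2 := by
          rw [← Finset.mul_sum]
          ring
        rw [heq]
        linarith
      exact mul_le_mul hsqle hexple (Real.exp_nonneg _) hKpos.le
    calc (∏ j, h j (η j)) * gaussDensity (A p) η
        ≤ (∏ j, B j) * (K * ∏ j, Real.exp (-(4 * c)⁻¹ * η j ^ 2)) := by
          refine mul_le_mul ?_ hgb hg0 (Finset.prod_nonneg fun j _ => hB0 j)
          exact Finset.prod_le_prod (fun j _ => h0 j _) fun j _ => hB j _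
      _ = bound η := by rw [hbound]; ring
  -- limit function and DCT
  have hlim : ∀ᵐ η : Fin n → ℝ, Tendsto
      (fun p => (∏ j, h j (η j)) * gaussDensity (A p) η) atTop
      (𝓝 ((∏ j, h j (η j)) * gaussDensity (c • (1 : Matrix (Fin n) (Fin n) ℝ)) η)) :=
    ae_of_all _ fun η => (hptwise η).const_mul _
  have hDCT := tendsto_integral_filter_of_dominated_convergence bound
    (Eventually.of_forall hmeas) h_bound hbound_int hlim
  have hfinal : ∫ η : Fin n → ℝ,
      (∏ j, h j (η j)) * gaussDensity (c • (1 : Matrix (Fin n) (Fin n) ℝ)) η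
      = ∏ j, ∫ t : ℝ, h j t * gauss1 c t := by
    have : ∀ η : Fin n → ℝ, (∏ j, h j (η j)) * gaussDensity (c • (1 : Matrix (Fin n) (Fin n) ℝ)) η
        = ∏ j, (h j (η j) * gauss1 c (η j)) := by
      intro η
      rw [gaussDensity_factor hc, Finset.prod_mul_distrib]
    simp_rw [this]
    exact MeasureTheory.integral_fintype_prod_eq_prod
      (fun j t => h j t * gauss1 c t)
  rwa [hfinal] at hDCT

/-- **Posterior predictive moment convergence (Theorem 4(a)).** If `Aₚ → cIₙ`
entrywise, then the ratio `∫ gᵢ ∏ⱼgⱼ dN(0,Aₚ) / ∫ ∏ⱼgⱼ dN(0,Aₚ)` converges to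
`∫ gᵢ² φ_c / ∫ gᵢ φ_c`, the denominators being eventually strictly positive. -/
theorem posterior_predictive_moment_limit
    (n : ℕ) (hn : 1 ≤ n) (c : ℝ) (hc : 0 < c) (i : Fin n)
    (g : Fin n → ℝ → ℝ)
    (hgm : ∀ j, Measurable (g j)) (hg0 : ∀ j t, 0 ≤ g j t)
    (hgb : ∀ j, ∃ B, ∀ t, g j t ≤ B)
    (hgpos : ∀ j, 0 < ∫ t : ℝ, g j t * gauss1 c t)
    (A : ℕ → Matrix (Fin n) (Fin n) ℝ) (hA : ∀ p, (A p).PosDef)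
    (hAc : ∀ a b, Tendsto (fun p => A p a b) atTop
      (𝓝 ((c • (1 : Matrix (Fin n) (Fin n) ℝ)) a b))) :
    Tendsto (fun p =>
        (∫ η : Fin n → ℝ, g i (η i) * (∏ j, g j (η j)) * gaussDensity (A p) η) /
        (∫ η : Fin n → ℝ, (∏ j, g j (η j)) * gaussDensity (A p) η))
      atTop (𝓝 ((∫ t : ℝ, (g i t) ^ 2 * gauss1 c t) / (∫ t : ℝ, g i t * gauss1 c t))) ∧
    (∀ᶠ p in atTop,
      0 < ∫ η : Fin n → ℝ, (∏ j, g j (η j)) * gaussDensity (A p) η) := by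
  have hden := conv_aux n hn c hc g hgm hg0 hgb A hAc
  set D := ∏ j, ∫ t : ℝ, g j t * gauss1 c t with hD
  have hDpos : 0 < D := Finset.prod_pos fun j _ => hgpos j
  set h : Fin n → ℝ → ℝ := fun j t => g j t * (if j = i then g i t else 1) with hh
  have hm : ∀ j, Measurable (h j) := by
    intro j
    rcases eq_or_ne j i with rfl | hj
    · simp only [hh, if_pos rfl]
      exact (hgm j).mul (hgm j)
    · simp only [hh, if_neg hj, mul_one]
      exact hgm j
  have h0' : ∀ j t, 0 ≤ h j t := by
    intro j t
    rcases eq_or_ne j i with rfl | hj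
    · simp only [hh, if_pos rfl]
      exact mul_nonneg (hg0 j t) (hg0 j t)
    · simp only [hh, if_neg hj, mul_one]
      exact hg0 j t
  have hb' : ∀ j, ∃ B, ∀ t, h j t ≤ B := by
    intro j
    obtain ⟨Bj, hBj⟩ := hgb j
    rcases eq_or_ne j i with rfl | hj
    · refine ⟨Bj * Bj, fun t => ?_⟩
      simp only [hh, if_pos rfl]
      exact mul_le_mul (hBj t) (hBj t) (hg0 j t) (le_trans (hg0 j 0) (hBj 0))
    · refine ⟨Bj, fun t => ?_⟩
      simp only [hh, if_neg hj, mul_one]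
      exact hBj t
  have hnum := conv_aux n hn c hc h hm h0' hb' A hAc
  have hprod : ∀ η : Fin n → ℝ, ∏ j, h j (η j) = g i (η i) * ∏ j, g j (η j) := by
    intro η
    simp only [hh]
    rw [Finset.prod_mul_distrib, mul_comm]
    congr 1
    simp
  have hNi : (∫ t : ℝ, h i t * gauss1 c t) = ∫ t : ℝ, g i t ^ 2 * gauss1 c t := by
    simp only [hh, if_pos rfl, if_true, pow_two]
  have hNj : ∀ j, j ≠ i → (∫ t : ℝ, h j t * gauss1 c t) = ∫ t : ℝ, g j t * gauss1 c t := by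
    intro j hj
    simp only [hh, if_neg hj, mul_one]
  have hevpos : ∀ᶠ p in atTop,
      0 < ∫ η : Fin n → ℝ, (∏ j, g j (η j)) * gaussDensity (A p) η :=
    hden.eventually (eventually_gt_nhds hDpos)
  refine ⟨?_, hevpos⟩
  have hnum' : Tendsto (fun p =>
      ∫ η : Fin n → ℝ, g i (η i) * (∏ j, g j (η j)) * gaussDensity (A p) η) atTop
      (𝓝 (∏ j, ∫ t : ℝ, h j t * gauss1 c t)) := by
    simpa only [hprod] using hnum
  have htendsto := hnum'.div hden (ne_of_gt hDpos)
  have hval : (∏ j, ∫ t : ℝ, h j t * gauss1 c t) / D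
      = (∫ t : ℝ, g i t ^ 2 * gauss1 c t) / (∫ t : ℝ, g i t * gauss1 c t) := by
    set P := ∏ j ∈ Finset.univ.erase i, ∫ t : ℝ, g j t * gauss1 c t with hP
    have hPpos : 0 < P := Finset.prod_pos fun j _ => hgpos j
    have hDsplit : D = (∫ t : ℝ, g i t * gauss1 c t) * P := by
      rw [hD, ← Finset.mul_prod_erase Finset.univ _ (Finset.mem_univ i)]
    have hNsplit : (∏ j, ∫ t : ℝ, h j t * gauss1 c t)
        = (∫ t : ℝ, g i t ^ 2 * gauss1 c t) * P := by
      rw [← Finset.mul_prod_erase Finset.univ _ (Finset.mem_univ i), hNi]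
      congr 1
      exact Finset.prod_congr rfl fun j hj => hNj j (Finset.ne_of_mem_erase hj)
    rw [hDsplit, hNsplit, mul_div_mul_right _ _ (ne_of_gt hPpos)]
  rwa [hval] at htendsto
end

section
/- Fix n ≥ 1, c > 0, δ > (2c)^{-1}, and i ∈ {1,…,n}. Let gᵢ : ℝ → (0,∞) be measurable with ∫_ℝ gᵢ(t)^{-1} e^{−δt²} dt = ∞, and for j ≠ i let gⱼ : ℝ → [0,∞) be bounded measurable with ∫_ℝ gⱼ(t) e^{−δt²} dt > 0. Let (A_p)_{p≥1} be symmetric positive definite n×n real matrices with A_p → c I_n entrywise. For a symmetric positive definite n×n matrix A, let φ_A(η) = (2π)^{-n/2}(det A)^{-1/2} exp(−½ ηᵀA^{-1}η); integrals are with respect to Lebesgue measure. Then ∫_{ℝⁿ} gᵢ(ηᵢ)^{-1} ∏_{j≠i} gⱼ(ηⱼ) φ_{A_p}(η) dη → ∞ as p → ∞. -/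
open MeasureTheory Matrix Filter Topology Finset
open scoped ENNReal

theorem my_lintegral_fin_prod {n : ℕ} (f : Fin n → ℝ → ℝ≥0∞) (hf : ∀ i, Measurable (f i)) :
    ∫⁻ x : Fin n → ℝ, ∏ i, f i (x i) = ∏ i, ∫⁻ x, f i x := by
  induction n with
  | zero => simp [volume_pi, lintegral_const]
  | succ n ih =>
      calc
        ∫⁻ x : Fin (n+1) → ℝ, ∏ i, f i (x i)
            = ∫⁻ x : ℝ × (Fin n → ℝ),
                f 0 x.1 * ∏ i : Fin n, f i.succ (x.2 i) := by
          rw [volume_pi, ← ((measurePreserving_piFinSuccAbove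
            (fun _ : Fin (n+1) => (volume : Measure ℝ)) 0).symm).lintegral_comp_emb
            (MeasurableEquiv.measurableEmbedding _)]
          refine lintegral_congr fun x => ?_
          rw [Fin.prod_univ_succ]
          simp [MeasurableEquiv.piFinSuccAbove_symm_apply, Fin.insertNthEquiv,
            Fin.insertNth_zero, Fin.zero_succAbove]
        _ = (∫⁻ x, f 0 x) * ∏ i : Fin n, ∫⁻ x, f i.succ x := by
          rw [← ih (fun i => f i.succ) (fun i => hf _), ← lintegral_prod_mul
            (hf 0).aemeasurable]
          · rfl
          · exact (Finset.measurable_prod _ fun i _ =>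
              (hf i.succ).comp (measurable_pi_apply i)).aemeasurable
        _ = ∏ i, ∫⁻ x, f i x := by rw [Fin.prod_univ_succ]

/-- **Divergence half of Theorem 4(b).** If `∫ gᵢ⁻¹ e^{−δt²} dt = ∞` for some
`δ > (2c)⁻¹` and `Aₚ → cIₙ` entrywise, then
`∫ gᵢ(ηᵢ)⁻¹ ∏_{j≠i} gⱼ(ηⱼ) φ_{Aₚ}(η) dη → ∞` as `p → ∞`. -/
theorem posterior_variance_integral_diverges
    (n : ℕ) (hn : 1 ≤ n) (c δ : ℝ) (hc : 0 < c) (hδ : (2 * c)⁻¹ < δ) (i : Fin n)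
    (g : Fin n → ℝ → ℝ)
    (hgm : ∀ j, Measurable (g j)) (hg0 : ∀ j t, 0 ≤ g j t)
    (hgi : ∀ t, 0 < g i t)
    (hgb : ∀ j, j ≠ i → ∃ B, ∀ t, g j t ≤ B)
    (hgidiv : (∫⁻ t : ℝ, ENNReal.ofReal ((g i t)⁻¹ * Real.exp (-δ * t ^ 2))) = ⊤)
    (hgpos : ∀ j, j ≠ i → 0 < ∫ t : ℝ, g j t * Real.exp (-δ * t ^ 2))
    (A : ℕ → Matrix (Fin n) (Fin n) ℝ) (hA : ∀ p, (A p).PosDef)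
    (hAc : ∀ a b, Tendsto (fun p => A p a b) atTop
      (𝓝 ((c • (1 : Matrix (Fin n) (Fin n) ℝ)) a b))) :
    Tendsto (fun p => ∫⁻ η : Fin n → ℝ,
        ENNReal.ofReal ((g i (η i))⁻¹ * (∏ j ∈ Finset.univ.erase i, g j (η j)) *
          gaussDensity (A p) η))
      atTop (𝓝 (⊤ : ℝ≥0∞)) := by
  classical
  -- one-dimensional factors
  set h : Fin n → ℝ → ℝ :=
    fun j t => (if j = i then (g i t)⁻¹ else g j t) * Real.exp (-δ * t ^ 2) with hh
  set F : Fin n → ℝ → ℝ≥0∞ := fun j t => ENNReal.ofReal (h j t) with hF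
  have hhnn : ∀ j t, 0 ≤ h j t := by
    intro j t
    refine mul_nonneg ?_ (Real.exp_nonneg _)
    by_cases hj : j = i
    · simp [hj, inv_nonneg, (hgi t).le]
    · simp [hj, hg0 j t]
  have hFmeas : ∀ j, Measurable (F j) := by
    intro j
    refine ENNReal.measurable_ofReal.comp (Measurable.mul ?_ ?_)
    · by_cases hj : j = i
      · simpa [hj] using hgm i
      · simpa [hj] using hgm j
    · exact (Real.measurable_exp.comp ((measurable_const.mul (measurable_id.pow_const 2))))
  have hFi : (∫⁻ t, F i t) = ⊤ := by
    simpa [hF, hh] using hgidiv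
  have hFj : ∀ j, j ≠ i → (∫⁻ t, F j t) ≠ 0 := by
    intro j hj h0
    have hae : ∀ᵐ t : ℝ, F j t = 0 := (lintegral_eq_zero_iff (hFmeas j)).mp h0
    have hle : (fun t => h j t) ≤ᵐ[volume] 0 := by
      filter_upwards [hae] with t ht
      simpa [hF, ENNReal.ofReal_eq_zero] using ht
    have : (∫ t : ℝ, h j t) ≤ 0 := integral_nonpos_of_ae hle
    have heq : (∫ t : ℝ, h j t) = ∫ t : ℝ, g j t * Real.exp (-δ * t ^ 2) := by
      simp [hh, if_neg hj]
    rw [heq] at this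
    exact absurd (hgpos j hj) (not_lt.mpr this)
  have hprodF : (∏ j, ∫⁻ t, F j t) = ⊤ := by
    rw [← Finset.mul_prod_erase (univ : Finset (Fin n)) (fun j => ∫⁻ t, F j t) (mem_univ i),
      hFi, ENNReal.top_mul]
    exact Finset.prod_ne_zero_iff.mpr fun j hj => hFj j (Finset.ne_of_mem_erase hj)
  -- convergence of the inverse matrices
  have hAt : Tendsto A atTop (𝓝 (c • (1 : Matrix (Fin n) (Fin n) ℝ))) := by
    refine tendsto_pi_nhds.mpr ?_
    intro a
    rw [tendsto_pi_nhds]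
    exact hAc a
  have hdetne : (c • (1 : Matrix (Fin n) (Fin n) ℝ)).det ≠ 0 := by
    simp [Matrix.det_smul, hc.ne']
  have hcontinv : ContinuousAt Inv.inv (c • (1 : Matrix (Fin n) (Fin n) ℝ)) := by
    apply continuousAt_matrix_inv
    exact NormedRing.inverse_continuousAt (hdetne.isUnit.unit)
  have hinvval : (c • (1 : Matrix (Fin n) (Fin n) ℝ))⁻¹
      = c⁻¹ • (1 : Matrix (Fin n) (Fin n) ℝ) := by
    apply Matrix.inv_eq_right_inv
    rw [Matrix.smul_mul, Matrix.mul_smul, Matrix.one_mul, smul_smul,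
      mul_inv_cancel₀ hc.ne', one_smul]
  have hAinv : Tendsto (fun p => (A p)⁻¹) atTop
      (𝓝 (c⁻¹ • (1 : Matrix (Fin n) (Fin n) ℝ))) := by
    rw [← hinvval]
    exact hcontinv.tendsto.comp hAt
  have hAinvab : ∀ a b, Tendsto (fun p => (A p)⁻¹ a b) atTop
      (𝓝 ((c⁻¹ • (1 : Matrix (Fin n) (Fin n) ℝ)) a b)) := by
    intro a b
    have h1 := tendsto_pi_nhds.mp hAinv a
    exact tendsto_pi_nhds.mp h1 b
  set N : Matrix (Fin n) (Fin n) ℝ := c⁻¹ • (1 : Matrix (Fin n) (Fin n) ℝ) with hN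
  have hT : Tendsto (fun p => ∑ a : Fin n, ∑ b : Fin n, |(A p)⁻¹ a b - N a b|)
      atTop (𝓝 0) := by
    have habs : ∀ a b, Tendsto (fun p => |(A p)⁻¹ a b - N a b|) atTop (𝓝 0) := by
      intro a b
      have := ((hAinvab a b).sub (tendsto_const_nhds (x := N a b))).abs
      simpa using this
    have := tendsto_finset_sum (univ : Finset (Fin n))
      (fun a _ => tendsto_finset_sum (univ : Finset (Fin n)) (fun b _ => habs a b))
    simpa using this
  have hcδ : c⁻¹ < 2 * δ := by
    have h2c : (0:ℝ) < 2 * c := by positivity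
    have h1 : (2*c)⁻¹ * (2*c) = 1 := inv_mul_cancel₀ h2c.ne'
    have h2 : c⁻¹ * c = 1 := inv_mul_cancel₀ hc.ne'
    nlinarith [mul_lt_mul_of_pos_right hδ h2c, inv_pos.mpr hc]
  have hεpos : (0:ℝ) < 2 * δ - c⁻¹ := by linarith
  have hev : ∀ᶠ p in atTop,
      ∑ a : Fin n, ∑ b : Fin n, |(A p)⁻¹ a b - N a b| < 2 * δ - c⁻¹ :=
    hT.eventually_lt_const hεpos
  -- key: for such p, the integral is ⊤
  have key : ∀ p, (∑ a : Fin n, ∑ b : Fin n, |(A p)⁻¹ a b - N a b| < 2 * δ - c⁻¹) →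
      (∫⁻ η : Fin n → ℝ,
        ENNReal.ofReal ((g i (η i))⁻¹ * (∏ j ∈ Finset.univ.erase i, g j (η j)) *
          gaussDensity (A p) η)) = ⊤ := by
    intro p hp
    set κ : ℝ := (Real.sqrt ((2 * Real.pi) ^ n * (A p).det))⁻¹ with hκ
    have hκpos : 0 < κ := by
      have hdp : 0 < (2 * Real.pi) ^ n * (A p).det :=
        mul_pos (pow_pos (by positivity) n) (hA p).det_pos
      exact inv_pos.mpr (Real.sqrt_pos.mpr hdp)
    -- quadratic form bound
    have hQ : ∀ η : Fin n → ℝ,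
        η ⬝ᵥ (A p)⁻¹.mulVec η ≤ 2 * δ * ∑ j, (η j) ^ 2 := by
      intro η
      set S : ℝ := ∑ j, (η j) ^ 2 with hS
      have hSnn : 0 ≤ S := Finset.sum_nonneg fun j _ => sq_nonneg _
      have hsq : ∀ a, (η a) ^ 2 ≤ S := fun a =>
        Finset.single_le_sum (f := fun j => (η j) ^ 2) (fun j _ => sq_nonneg _) (mem_univ a)
      have hQsum : η ⬝ᵥ (A p)⁻¹.mulVec η
          = ∑ a, ∑ b, η a * ((A p)⁻¹ a b * η b) := by
        simp [dotProduct, Matrix.mulVec, Finset.mul_sum]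
      have hNsum : (∑ a, ∑ b, η a * (N a b * η b)) = c⁻¹ * S := by
        simp only [hN, Matrix.smul_apply, Matrix.one_apply, smul_eq_mul]
        rw [hS, Finset.mul_sum]
        refine Finset.sum_congr rfl fun a _ => ?_
        rw [Finset.sum_eq_single a]
        · simp; ring
        · intro b _ hb; simp [Ne.symm hb]
        · simp
      have hdiff : |∑ a, ∑ b, η a * ((A p)⁻¹ a b * η b) - ∑ a, ∑ b, η a * (N a b * η b)|
          ≤ (∑ a : Fin n, ∑ b : Fin n, |(A p)⁻¹ a b - N a b|) * S := by
        rw [← Finset.sum_sub_distrib]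
        calc |∑ a, (∑ b, η a * ((A p)⁻¹ a b * η b) - ∑ b, η a * (N a b * η b))|
            ≤ ∑ a, |∑ b, η a * ((A p)⁻¹ a b * η b) - ∑ b, η a * (N a b * η b)| :=
              Finset.abs_sum_le_sum_abs _ _
          _ ≤ ∑ a, ∑ b, |(A p)⁻¹ a b - N a b| * S := by
              refine Finset.sum_le_sum fun a _ => ?_
              rw [← Finset.sum_sub_distrib]
              calc |∑ b, (η a * ((A p)⁻¹ a b * η b) - η a * (N a b * η b))|
                  ≤ ∑ b, |η a * ((A p)⁻¹ a b * η b) - η a * (N a b * η b)| :=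
                    Finset.abs_sum_le_sum_abs _ _
                _ ≤ ∑ b, |(A p)⁻¹ a b - N a b| * S := by
                    refine Finset.sum_le_sum fun b _ => ?_
                    have heq : η a * ((A p)⁻¹ a b * η b) - η a * (N a b * η b)
                        = ((A p)⁻¹ a b - N a b) * (η a * η b) := by ring
                    rw [heq, abs_mul]
                    refine mul_le_mul_of_nonneg_left ?_ (abs_nonneg _)
                    rw [abs_mul]
                    nlinarith [hsq a, hsq b, sq_abs (η a), sq_abs (η b),
                      abs_nonneg (η a), abs_nonneg (η b), sq_nonneg (|η a| - |η b|)]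
          _ = (∑ a : Fin n, ∑ b : Fin n, |(A p)⁻¹ a b - N a b|) * S := by
              rw [Finset.sum_mul]
              exact Finset.sum_congr rfl fun a _ => (Finset.sum_mul _ _ _).symm
      have hbound : ∑ a, ∑ b, η a * ((A p)⁻¹ a b * η b)
          ≤ c⁻¹ * S + (∑ a : Fin n, ∑ b : Fin n, |(A p)⁻¹ a b - N a b|) * S := by
        have := abs_le.mp (le_refl |∑ a, ∑ b, η a * ((A p)⁻¹ a b * η b)
          - ∑ a, ∑ b, η a * (N a b * η b)|) |>.2
        have h2 := le_abs_self (∑ a, ∑ b, η a * ((A p)⁻¹ a b * η b)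
          - ∑ a, ∑ b, η a * (N a b * η b))
        linarith [hdiff, hNsum ▸ h2]
      rw [hQsum]
      have := mul_le_mul_of_nonneg_right hp.le hSnn
      calc ∑ a, ∑ b, η a * ((A p)⁻¹ a b * η b)
          ≤ c⁻¹ * S + (∑ a : Fin n, ∑ b : Fin n, |(A p)⁻¹ a b - N a b|) * S := hbound
        _ ≤ c⁻¹ * S + (2 * δ - c⁻¹) * S := by linarith
        _ = 2 * δ * S := by ring
    -- pointwise lower bound
    have hptwise : ∀ η : Fin n → ℝ,
        ENNReal.ofReal κ * ∏ j, F j (η j) ≤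
          ENNReal.ofReal ((g i (η i))⁻¹ * (∏ j ∈ Finset.univ.erase i, g j (η j)) *
            gaussDensity (A p) η) := by
      intro η
      have hFrw : (∏ j, F j (η j)) = ENNReal.ofReal (∏ j, h j (η j)) :=
        (ENNReal.ofReal_prod_of_nonneg fun j _ => hhnn j (η j)).symm
      rw [hFrw, ← ENNReal.ofReal_mul hκpos.le]
      apply ENNReal.ofReal_le_ofReal
      set G : ℝ := (g i (η i))⁻¹ * ∏ j ∈ Finset.univ.erase i, g j (η j) with hG
      have hGnn : 0 ≤ G :=
        mul_nonneg (inv_nonneg.mpr (hgi (η i)).le)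
          (Finset.prod_nonneg fun j _ => hg0 j (η j))
      have hprodh : (∏ j, h j (η j)) = G * Real.exp (∑ j, -δ * (η j) ^ 2) := by
        rw [hh]
        rw [Finset.prod_mul_distrib, ← Real.exp_sum]
        congr 1
        rw [← Finset.mul_prod_erase (univ : Finset (Fin n))
          (fun j => if j = i then (g i (η j))⁻¹ else g j (η j)) (mem_univ i)]
        rw [hG]
        congr 1
        · simp
        · exact Finset.prod_congr rfl fun j hj => if_neg (Finset.ne_of_mem_erase hj)
      have hexp : Real.exp (∑ j, -δ * (η j) ^ 2)
          ≤ Real.exp (-(η ⬝ᵥ (A p)⁻¹.mulVec η) / 2) := by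
        apply Real.exp_le_exp.mpr
        have hsum : (∑ j, -δ * (η j) ^ 2) = -(δ * ∑ j, (η j) ^ 2) := by
          rw [Finset.mul_sum]
          simp [neg_mul]
        rw [hsum]
        have := hQ η
        linarith
      calc κ * ∏ j, h j (η j) = G * (κ * Real.exp (∑ j, -δ * (η j) ^ 2)) := by
            rw [hprodh]; ring
        _ ≤ G * (κ * Real.exp (-(η ⬝ᵥ (A p)⁻¹.mulVec η) / 2)) := by
            refine mul_le_mul_of_nonneg_left ?_ hGnn
            exact mul_le_mul_of_nonneg_left hexp hκpos.le
        _ = G * gaussDensity (A p) η := rfl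
    -- put together
    have hle : ENNReal.ofReal κ * ∏ j, (∫⁻ t, F j t) ≤
        ∫⁻ η : Fin n → ℝ,
          ENNReal.ofReal ((g i (η i))⁻¹ * (∏ j ∈ Finset.univ.erase i, g j (η j)) *
            gaussDensity (A p) η) := by
      rw [← my_lintegral_fin_prod F hFmeas,
        ← lintegral_const_mul' (ENNReal.ofReal κ) _ ENNReal.ofReal_ne_top]
      exact lintegral_mono hptwise
    rw [hprodF, ENNReal.mul_top (by simpa using (ENNReal.ofReal_pos.mpr hκpos).ne')] at hle
    exact top_le_iff.mp hle
  have heq : (fun _ : ℕ => (⊤ : ℝ≥0∞)) =ᶠ[atTop] fun p =>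
      ∫⁻ η : Fin n → ℝ,
        ENNReal.ofReal ((g i (η i))⁻¹ * (∏ j ∈ Finset.univ.erase i, g j (η j)) *
          gaussDensity (A p) η) := by
    filter_upwards [hev] with p hp
    exact (key p hp).symm
  exact Tendsto.congr' heq tendsto_const_nhds
end

section
/- Fix n ≥ 1, c > 0, δ ∈ (0, (2c)^{-1}), and i ∈ {1,…,n}. Let gᵢ : ℝ → (0,∞) be measurable with ∫_ℝ gᵢ(t)^{-1} e^{−δt²} dt < ∞, and for j ≠ i let gⱼ : ℝ → [0,∞) be bounded measurable. Let (A_p)_{p≥1} be symmetric positive definite n×n real matrices with A_p → c I_n entrywise. For a symmetric positive definite n×n matrix A, let φ_A(η) = (2π)^{-n/2}(det A)^{-1/2} exp(−½ ηᵀA^{-1}η); integrals are with respect to Lebesgue measure. Then limsup_{p→∞} ∫_{ℝⁿ} gᵢ(ηᵢ)^{-1} ∏_{j≠i} gⱼ(ηⱼ) φ_{A_p}(η) dη < ∞. -/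
open MeasureTheory Matrix Filter Topology Finset
open scoped ENNReal

lemma quad_lower_s16 {n : ℕ} (M : Matrix (Fin n) (Fin n) ℝ) (γ ε : ℝ) (hε : 0 ≤ ε)
    (h : ∀ a b, |M a b - (if a = b then γ else 0)| ≤ ε) (η : Fin n → ℝ) :
    (γ - ε * n) * (∑ j, η j ^ 2) ≤ η ⬝ᵥ M.mulVec η := by
  have h1 : ∀ a : Fin n, ∑ b, η a * ((if a = b then γ else 0) * η b) = γ * η a ^ 2 := by
    intro a
    rw [Finset.sum_eq_single a (fun b _ hb => by simp [Ne.symm hb]) (by simp)]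
    simp [sq]; ring
  have key : η ⬝ᵥ M.mulVec η
      = γ * ∑ j, η j ^ 2 + ∑ a, ∑ b, η a * ((M a b - if a = b then γ else 0) * η b) := by
    simp only [dotProduct, mulVec, Finset.mul_sum]
    have : ∀ a b : Fin n, η a * (M a b * η b)
        = η a * ((if a = b then γ else 0) * η b)
          + η a * ((M a b - if a = b then γ else 0) * η b) := fun a b => by ring
    calc ∑ a, ∑ b, η a * (M a b * η b)
        = ∑ a, (∑ b, η a * ((if a = b then γ else 0) * η b)
            + ∑ b, η a * ((M a b - if a = b then γ else 0) * η b)) := by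
          refine Finset.sum_congr rfl fun a _ => ?_
          rw [← Finset.sum_add_distrib]
          exact Finset.sum_congr rfl fun b _ => this a b
      _ = _ := by
          rw [Finset.sum_add_distrib]
          exact congrArg₂ (· + ·) (Finset.sum_congr rfl fun a _ => h1 a) rfl
  have hbound : |∑ a, ∑ b, η a * ((M a b - if a = b then γ else 0) * η b)|
      ≤ ε * (∑ a, |η a|) ^ 2 := by
    calc |∑ a, ∑ b, η a * ((M a b - if a = b then γ else 0) * η b)|
        ≤ ∑ a, ∑ b, |η a| * (ε * |η b|) := by
          refine (Finset.abs_sum_le_sum_abs _ _).trans (Finset.sum_le_sum fun a _ => ?_)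
          refine (Finset.abs_sum_le_sum_abs _ _).trans (Finset.sum_le_sum fun b _ => ?_)
          rw [abs_mul, abs_mul]
          exact mul_le_mul_of_nonneg_left (mul_le_mul_of_nonneg_right (h a b) (abs_nonneg _))
            (abs_nonneg _)
      _ = ε * (∑ a, |η a|) ^ 2 := by
          simp only [← Finset.mul_sum, ← Finset.sum_mul]
          ring
  have hcs : (∑ a, |η a|) ^ 2 ≤ (n : ℝ) * ∑ j, η j ^ 2 := by
    have := sq_sum_le_card_mul_sum_sq (s := (univ : Finset (Fin n))) (f := fun a => |η a|)
    simpa [sq_abs] using this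
  have habs := (abs_le.1 hbound).1
  have : -(ε * ((n : ℝ) * ∑ j, η j ^ 2))
      ≤ ∑ a, ∑ b, η a * ((M a b - if a = b then γ else 0) * η b) := by
    refine le_trans ?_ habs
    exact neg_le_neg (mul_le_mul_of_nonneg_left hcs hε)
  nlinarith [Finset.sum_nonneg (fun j (_ : j ∈ (univ : Finset (Fin n))) => sq_nonneg (η j))]

/-- **Finiteness half of Theorem 4(b).** If `∫ gᵢ⁻¹ e^{−δt²} dt < ∞` for some
`δ < (2c)⁻¹` and `Aₚ → cIₙ` entrywise, then
`limsup_p ∫ gᵢ(ηᵢ)⁻¹ ∏_{j≠i} gⱼ(ηⱼ) φ_{Aₚ}(η) dη < ∞`. -/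
theorem posterior_variance_integral_limsup_finite
    (n : ℕ) (hn : 1 ≤ n) (c δ : ℝ) (hc : 0 < c) (hδ0 : 0 < δ) (hδ : δ < (2 * c)⁻¹)
    (i : Fin n)
    (g : Fin n → ℝ → ℝ)
    (hgm : ∀ j, Measurable (g j)) (hg0 : ∀ j t, 0 ≤ g j t)
    (hgi : ∀ t, 0 < g i t)
    (hgb : ∀ j, j ≠ i → ∃ B, ∀ t, g j t ≤ B)
    (hgifin : (∫⁻ t : ℝ, ENNReal.ofReal ((g i t)⁻¹ * Real.exp (-δ * t ^ 2))) < ⊤)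
    (A : ℕ → Matrix (Fin n) (Fin n) ℝ) (hA : ∀ p, (A p).PosDef)
    (hAc : ∀ a b, Tendsto (fun p => A p a b) atTop
      (𝓝 ((c • (1 : Matrix (Fin n) (Fin n) ℝ)) a b))) :
    Filter.limsup (fun p => ∫⁻ η : Fin n → ℝ,
        ENNReal.ofReal ((g i (η i))⁻¹ * (∏ j ∈ Finset.univ.erase i, g j (η j)) *
          gaussDensity (A p) η))
      atTop < ⊤ := by
  -- constants
  have hn0 : (n : ℝ) ≠ 0 := Nat.cast_ne_zero.2 (by omega)
  have h2δ : 2 * δ < c⁻¹ := by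
    rw [mul_inv] at hδ; nlinarith
  set ε0 : ℝ := (c⁻¹ - 2 * δ) / n with hε0def
  have hε0 : 0 < ε0 := by
    apply div_pos (by linarith)
    exact_mod_cast Nat.pos_of_ne_zero (by omega)
  have hεn : c⁻¹ - ε0 * n = 2 * δ := by
    rw [hε0def, div_mul_cancel₀ _ hn0]; ring
  set K : ℝ := (Real.sqrt ((2 * Real.pi) ^ n * (c ^ n / 2)))⁻¹ with hKdef
  have hK0 : 0 ≤ K := inv_nonneg.2 (Real.sqrt_nonneg _)
  -- bounds on g j
  have hgb' : ∀ j : Fin n, ∃ Bj : ℝ, 0 ≤ Bj ∧ (j ≠ i → ∀ t, g j t ≤ Bj) := by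
    intro j
    by_cases hj : j = i
    · exact ⟨1, zero_le_one, fun h => absurd hj h⟩
    · obtain ⟨Bj, hBj⟩ := hgb j hj
      exact ⟨max Bj 0, le_max_right _ _, fun _ t => (hBj t).trans (le_max_left _ _)⟩
  choose B hB0 hBle using hgb'
  set Bprod : ℝ := ∏ j ∈ Finset.univ.erase i, B j with hBproddef
  have hBprod0 : 0 ≤ Bprod := Finset.prod_nonneg fun j _ => hB0 j
  set C : ℝ := Bprod * K with hCdef
  -- the dominating per-coordinate functions
  set F : Fin n → ℝ → ℝ := fun j t =>
    if j = i then (g i t)⁻¹ * Real.exp (-δ * t ^ 2) else Real.exp (-δ * t ^ 2) with hFdef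
  have hFint : ∀ j, Integrable (F j) := by
    intro j
    by_cases hj : j = i
    · simp only [hFdef, hj, if_pos rfl]
      refine ⟨((hgm i).inv.mul
        (((measurable_id.pow_const 2).const_mul (-δ)).exp)).aestronglyMeasurable, ?_⟩
      rw [hasFiniteIntegral_iff_ofReal]
      · exact hgifin
      · exact Filter.Eventually.of_forall fun t =>
          mul_nonneg (inv_nonneg.2 (hgi t).le) (Real.exp_pos _).le
    · simp only [hFdef, if_neg hj]
      exact integrable_exp_neg_mul_sq hδ0
  have hprodInt : Integrable (fun x : Fin n → ℝ => C * ∏ j, F j (x j)) :=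
    (Integrable.fintype_prod (𝕜 := ℝ) hFint).const_mul C
  set M : ℝ≥0∞ := ∫⁻ x : Fin n → ℝ, ENNReal.ofReal (C * ∏ j, F j (x j)) with hMdef
  have hMfin : M < ⊤ := hprodInt.lintegral_lt_top
  -- convergence facts
  have hAt : Tendsto (fun p => A p) atTop (𝓝 (c • (1 : Matrix (Fin n) (Fin n) ℝ))) :=
    tendsto_pi_nhds.2 fun a => tendsto_pi_nhds.2 fun b => hAc a b
  have hdet : Tendsto (fun p => (A p).det) atTop (𝓝 (c ^ n)) := by
    have h1 := ((Continuous.matrix_det continuous_id).continuousAt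
      (x := c • (1 : Matrix (Fin n) (Fin n) ℝ))).tendsto.comp hAt
    simpa [Function.comp_def] using h1
  have hcn0 : (0:ℝ) < c ^ n := pow_pos hc n
  have hdetev : ∀ᶠ p in atTop, c ^ n / 2 < (A p).det :=
    hdet.eventually (eventually_gt_nhds (half_lt_self hcn0))
  have hcinv : (c • (1 : Matrix (Fin n) (Fin n) ℝ))⁻¹ = c⁻¹ • 1 := by
    apply Matrix.inv_eq_right_inv
    rw [smul_mul_assoc, one_mul, smul_smul, mul_inv_cancel₀ hc.ne', one_smul]
  have hinv : Tendsto (fun p => (A p)⁻¹) atTop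
      (𝓝 ((c • (1 : Matrix (Fin n) (Fin n) ℝ)))⁻¹) := by
    refine (continuousAt_matrix_inv _ ?_).tendsto.comp hAt
    rw [Ring.inverse_eq_inv']
    refine continuousAt_inv₀ ?_
    simpa using hcn0.ne'
  have hinvab : ∀ a b : Fin n, Tendsto (fun p => (A p)⁻¹ a b) atTop
      (𝓝 (if a = b then c⁻¹ else 0)) := by
    intro a b
    have h1 := tendsto_pi_nhds.1 (tendsto_pi_nhds.1 hinv a) b
    have : ((c • (1 : Matrix (Fin n) (Fin n) ℝ)))⁻¹ a b = if a = b then c⁻¹ else 0 := by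
      rw [hcinv]
      simp [Matrix.smul_apply, Matrix.one_apply, mul_ite]
    rwa [this] at h1
  have hinvev : ∀ᶠ p in atTop, ∀ a b : Fin n,
      |(A p)⁻¹ a b - (if a = b then c⁻¹ else 0)| < ε0 := by
    rw [Filter.eventually_all]
    intro a
    rw [Filter.eventually_all]
    intro b
    exact (hinvab a b).eventually (eventually_abs_sub_lt _ hε0)
  -- the eventual bound
  have hev : ∀ᶠ p in atTop, (∫⁻ η : Fin n → ℝ,
      ENNReal.ofReal ((g i (η i))⁻¹ * (∏ j ∈ Finset.univ.erase i, g j (η j)) *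
        gaussDensity (A p) η)) ≤ M := by
    filter_upwards [hdetev, hinvev] with p hdp hip
    refine lintegral_mono fun η => ENNReal.ofReal_le_ofReal ?_
    -- pointwise bound
    have hq : 2 * δ * (∑ j, η j ^ 2) ≤ η ⬝ᵥ (A p)⁻¹.mulVec η := by
      have := quad_lower_s16 ((A p)⁻¹) c⁻¹ ε0 hε0.le (fun a b => (hip a b).le) η
      rwa [hεn] at this
    have hexp : Real.exp (-(η ⬝ᵥ (A p)⁻¹.mulVec η) / 2)
        ≤ ∏ j, Real.exp (-δ * η j ^ 2) := by
      rw [← Real.exp_sum]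
      apply Real.exp_le_exp.2
      have : ∑ j, -δ * η j ^ 2 = -δ * ∑ j, η j ^ 2 := by rw [Finset.mul_sum]
      rw [this]
      linarith
    have hsqrt : Real.sqrt ((2 * Real.pi) ^ n * (c ^ n / 2))
        ≤ Real.sqrt ((2 * Real.pi) ^ n * (A p).det) := by
      apply Real.sqrt_le_sqrt
      have h2pi : (0:ℝ) < (2 * Real.pi) ^ n := pow_pos (by positivity) n
      exact mul_le_mul_of_nonneg_left hdp.le h2pi.le
    have hsqrtpos : 0 < Real.sqrt ((2 * Real.pi) ^ n * (c ^ n / 2)) := by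
      apply Real.sqrt_pos.2
      have h2pi : (0:ℝ) < (2 * Real.pi) ^ n := pow_pos (by positivity) n
      positivity
    have hgauss : gaussDensity (A p) η ≤ K * ∏ j, Real.exp (-δ * η j ^ 2) := by
      unfold gaussDensity
      refine mul_le_mul ?_ hexp (Real.exp_pos _).le hK0
      rw [hKdef]
      exact inv_anti₀ hsqrtpos hsqrt
    have hG0 : 0 ≤ gaussDensity (A p) η :=
      mul_nonneg (inv_nonneg.2 (Real.sqrt_nonneg _)) (Real.exp_pos _).le
    have hP : ∏ j ∈ Finset.univ.erase i, g j (η j) ≤ Bprod := by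
      refine Finset.prod_le_prod (fun j _ => hg0 j _) fun j hj => ?_
      exact hBle j (Finset.ne_of_mem_erase hj) (η j)
    have hginv0 : 0 ≤ (g i (η i))⁻¹ := inv_nonneg.2 (hgi _).le
    have hFeq : C * ∏ j, F j (η j)
        = (g i (η i))⁻¹ * Bprod * (K * ∏ j, Real.exp (-δ * η j ^ 2)) := by
      have e1 : ∏ j, F j (η j) = F i (η i) * ∏ j ∈ Finset.univ.erase i, F j (η j) :=
        (Finset.mul_prod_erase univ _ (Finset.mem_univ i)).symm
      have e2 : ∏ j, Real.exp (-δ * η j ^ 2)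
          = Real.exp (-δ * η i ^ 2) * ∏ j ∈ Finset.univ.erase i, Real.exp (-δ * η j ^ 2) :=
        (Finset.mul_prod_erase univ _ (Finset.mem_univ i)).symm
      have e3 : ∏ j ∈ Finset.univ.erase i, F j (η j)
          = ∏ j ∈ Finset.univ.erase i, Real.exp (-δ * η j ^ 2) :=
        Finset.prod_congr rfl fun j hj => by
          simp only [hFdef, if_neg (Finset.ne_of_mem_erase hj)]
      have e4 : F i (η i) = (g i (η i))⁻¹ * Real.exp (-δ * η i ^ 2) := by
        simp only [hFdef, if_pos rfl]
      rw [e1, e3, e4, e2, hCdef]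
      ring
    calc (g i (η i))⁻¹ * (∏ j ∈ Finset.univ.erase i, g j (η j)) * gaussDensity (A p) η
        ≤ ((g i (η i))⁻¹ * Bprod) * (K * ∏ j, Real.exp (-δ * η j ^ 2)) :=
          mul_le_mul (mul_le_mul_of_nonneg_left hP hginv0) hgauss hG0
            (mul_nonneg hginv0 hBprod0)
      _ = C * ∏ j, F j (η j) := hFeq.symm
  exact lt_of_le_of_lt (Filter.limsup_le_of_le (by isBoundedDefault) hev) hMfin
end

section
/- Fix n ≥ 1 and τ > 0. For j = 1,…,n let gⱼ : ℝ → [0,∞) be bounded measurable functions such that the limits aⱼ = lim_{t→−∞} gⱼ(t) and bⱼ = lim_{t→+∞} gⱼ(t) exist in [0,∞). Let (s_p)_{p≥1} be positive reals with s_p → ∞, and let (B_p)_{p≥1} be symmetric positive definite n×n real matrices with B_p → τ² I_n entrywise; set A_p = s_p B_p. For a symmetric positive definite n×n matrix A, let φ_A(η) = (2π)^{-n/2}(det A)^{-1/2} exp(−½ ηᵀA^{-1}η); integrals are with respect to Lebesgue measure. Then liminf_{p→∞} ∫_{ℝⁿ} ∏_{j=1}^n gⱼ(ηⱼ) φ_{A_p}(η)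 dη ≥ ∏_{j=1}^n (aⱼ + bⱼ)/2. -/
open MeasureTheory Matrix Filter Topology
open scoped ENNReal

namespace Thm5b

lemma sqrt_pow_nat {x : ℝ} (hx : 0 ≤ x) (n : ℕ) :
    Real.sqrt (x ^ n) = Real.sqrt x ^ n := by
  rw [Real.sqrt_eq_rpow, Real.sqrt_eq_rpow, ← Real.rpow_natCast (x ^ (1/2 : ℝ)) n,
    ← Real.rpow_natCast x n, ← Real.rpow_mul hx, ← Real.rpow_mul hx, mul_comm]

variable {n : ℕ}

lemma quad_measurable (M : Matrix (Fin n) (Fin n) ℝ) :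
    Measurable fun η : Fin n → ℝ => η ⬝ᵥ M.mulVec η := by
  simp only [Matrix.mulVec, dotProduct]
  exact Finset.measurable_sum _ fun i _ =>
    (measurable_pi_apply i).mul <| Finset.measurable_sum _ fun j _ =>
      measurable_const.mul (measurable_pi_apply j)

lemma gaussDensity_measurable (A : Matrix (Fin n) (Fin n) ℝ) :
    Measurable (gaussDensity A) :=
  measurable_const.mul (((quad_measurable A⁻¹).neg.div_const 2).exp)

lemma integrand_measurable {g : Fin n → ℝ → ℝ} (hgm : ∀ j, Measurable (g j))
    (A : Matrix (Fin n) (Fin n) ℝ) :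
    Measurable fun η : Fin n → ℝ =>
      ENNReal.ofReal ((∏ j, g j (η j)) * gaussDensity A η) :=
  ((Finset.measurable_prod _ fun j _ => (hgm j).comp (measurable_pi_apply j)).mul
    (gaussDensity_measurable A)).ennreal_ofReal

lemma lintegral_comp_const_smul (f : (Fin n → ℝ) → ℝ≥0∞) (hf : Measurable f)
    {c : ℝ} (hc : 0 < c) :
    ∫⁻ η, f η = ENNReal.ofReal (c ^ n) * ∫⁻ ζ, f (c • ζ) := by
  have hmap := Measure.map_addHaar_smul (μ := (volume : Measure (Fin n → ℝ))) (ne_of_gt hc)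
  have h1 : ∫⁻ ζ, f (c • ζ) = ∫⁻ η, f η ∂(Measure.map (c • ·) volume) :=
    (lintegral_map hf (measurable_const_smul c)).symm
  have hcn : (0:ℝ) < c ^ n := pow_pos hc n
  rw [h1, hmap, lintegral_smul_measure, smul_eq_mul,
    show Module.finrank ℝ (Fin n → ℝ) = n from Module.finrank_fin_fun ℝ,
    abs_of_nonneg (inv_nonneg.2 hcn.le), ← mul_assoc,
    ← ENNReal.ofReal_mul hcn.le, mul_inv_cancel₀ hcn.ne', ENNReal.ofReal_one, one_mul]

lemma smul_matrix_inv {A : Matrix (Fin n) (Fin n) ℝ} (hA : IsUnit A.det) {k : ℝ}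
    (hk : k ≠ 0) : (k • A)⁻¹ = k⁻¹ • A⁻¹ :=
  Matrix.inv_eq_left_inv (by
    rw [Matrix.smul_mul, Matrix.mul_smul, smul_smul, inv_mul_cancel₀ hk,
      Matrix.nonsing_inv_mul A hA, one_smul])

lemma gaussDensity_smul {B : Matrix (Fin n) (Fin n) ℝ} (hB : B.PosDef)
    {t : ℝ} (ht : 0 < t) (ζ : Fin n → ℝ) :
    gaussDensity (t • B) (Real.sqrt t • ζ) = (Real.sqrt t ^ n)⁻¹ * gaussDensity B ζ := by
  have hdet : 0 < B.det := hB.det_pos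
  have hinv : (t • B)⁻¹ = t⁻¹ • B⁻¹ :=
    smul_matrix_inv (isUnit_iff_ne_zero.2 hdet.ne') ht.ne'
  unfold gaussDensity
  rw [hinv, Matrix.det_smul, Fintype.card_fin]
  have hss : Real.sqrt t * Real.sqrt t = t := Real.mul_self_sqrt ht.le
  have hquad : (Real.sqrt t • ζ) ⬝ᵥ (t⁻¹ • B⁻¹).mulVec (Real.sqrt t • ζ)
      = ζ ⬝ᵥ B⁻¹.mulVec ζ := by
    rw [Matrix.smul_mulVec, Matrix.mulVec_smul, smul_dotProduct,
      dotProduct_smul, dotProduct_smul, smul_eq_mul, smul_eq_mul,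
      smul_eq_mul]
    calc Real.sqrt t * (t⁻¹ * (Real.sqrt t * (ζ ⬝ᵥ B⁻¹.mulVec ζ)))
        = (Real.sqrt t * Real.sqrt t) * t⁻¹ * (ζ ⬝ᵥ B⁻¹.mulVec ζ) := by ring
      _ = ζ ⬝ᵥ B⁻¹.mulVec ζ := by rw [hss, mul_inv_cancel₀ ht.ne', one_mul]
  rw [hquad]
  have hdetfac : Real.sqrt ((2 * Real.pi) ^ n * (t ^ n * B.det))
      = Real.sqrt t ^ n * Real.sqrt ((2 * Real.pi) ^ n * B.det) := by
    rw [show (2 * Real.pi) ^ n * (t ^ n * B.det) = t ^ n * ((2 * Real.pi) ^ n * B.det)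
        by ring,
      Real.sqrt_mul (pow_nonneg ht.le n), sqrt_pow_nat ht.le]
  rw [hdetfac, mul_inv, mul_assoc]

/-- 1-D centered Gaussian density with variance τ². -/
noncomputable def oneD (τ t : ℝ) : ℝ :=
  (Real.sqrt (2 * Real.pi * τ ^ 2))⁻¹ * Real.exp (-(2 * τ ^ 2)⁻¹ * t ^ 2)

lemma oneD_nonneg {τ : ℝ} (t : ℝ) : 0 ≤ oneD τ t :=
  mul_nonneg (inv_nonneg.2 (Real.sqrt_nonneg _)) (Real.exp_pos _).le

lemma oneD_integrable {τ : ℝ} (hτ : 0 < τ) : Integrable (oneD τ) :=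
  (integrable_exp_neg_mul_sq (by positivity)).const_mul _

lemma oneD_even {τ : ℝ} (t : ℝ) : oneD τ (-t) = oneD τ t := by
  simp [oneD, neg_pow]

lemma oneD_integral_Ioi {τ : ℝ} (hτ : 0 < τ) :
    ∫ t in Set.Ioi (0:ℝ), oneD τ t = 1 / 2 := by
  unfold oneD
  rw [MeasureTheory.integral_const_mul, integral_gaussian_Ioi,
    show Real.pi / (2 * τ ^ 2)⁻¹ = 2 * Real.pi * τ ^ 2 by field_simp]
  have h : (0:ℝ) < Real.sqrt (2 * Real.pi * τ ^ 2) :=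
    Real.sqrt_pos.2 (by positivity)
  field_simp

lemma oneD_integral_Iio {τ : ℝ} (hτ : 0 < τ) :
    ∫ t in Set.Iio (0:ℝ), oneD τ t = 1 / 2 := by
  rw [← integral_Iic_eq_integral_Iio]
  have h := integral_comp_neg_Iic (0 : ℝ) (oneD τ)
  simp only [oneD_even, neg_zero] at h
  rw [h]
  exact oneD_integral_Ioi hτ

/-- The limiting 1-D integrand. -/
noncomputable def qfun (a b τ : ℝ) (t : ℝ) : ℝ :=
  (if t < 0 then a else b) * oneD τ t

lemma qfun_nonneg {a b τ : ℝ} (ha : 0 ≤ a) (hb : 0 ≤ b) (t : ℝ) : 0 ≤ qfun a b τ t :=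
  mul_nonneg (by split <;> assumption) (oneD_nonneg t)

lemma qfun_integrable {a b τ : ℝ} (hτ : 0 < τ) : Integrable (qfun a b τ) := by
  apply (oneD_integrable hτ).bdd_mul (c := max |a| |b|)
  · exact ((measurable_const.ite measurableSet_Iio measurable_const).aestronglyMeasurable)
  · refine Filter.Eventually.of_forall fun t => ?_
    by_cases h : t < 0
    · simpa [h] using le_max_left |a| |b|
    · simpa [h] using le_max_right |a| |b|

lemma qfun_integral {a b τ : ℝ} (hτ : 0 < τ) (ha : 0 ≤ a) (hb : 0 ≤ b) :
    ∫ t, qfun a b τ t = (a + b) / 2 := by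
  have hint := qfun_integrable (a := a) (b := b) hτ
  rw [← intervalIntegral.integral_Iio_add_Ici (b := (0:ℝ)) hint.integrableOn
    hint.integrableOn]
  have h1 : ∫ t in Set.Iio (0:ℝ), qfun a b τ t = a / 2 := by
    rw [setIntegral_congr_fun measurableSet_Iio
      (g := fun t => a * oneD τ t) (fun t ht => by simp [qfun, Set.mem_Iio.1 ht])]
    rw [MeasureTheory.integral_const_mul, oneD_integral_Iio hτ]; ring
  have h2 : ∫ t in Set.Ici (0:ℝ), qfun a b τ t = b / 2 := by
    rw [setIntegral_congr_fun measurableSet_Ici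
      (g := fun t => b * oneD τ t) (fun t ht => by
        simp [qfun, not_lt.2 (Set.mem_Ici.1 ht)])]
    rw [MeasureTheory.integral_const_mul, integral_Ici_eq_integral_Ioi,
      oneD_integral_Ioi hτ]; ring
  rw [h1, h2]; ring

lemma gaussDensity_prod {τ : ℝ} (hτ : 0 < τ) (ζ : Fin n → ℝ) :
    gaussDensity (τ ^ 2 • (1 : Matrix (Fin n) (Fin n) ℝ)) ζ = ∏ j, oneD τ (ζ j) := by
  have hτ2 : (0:ℝ) < τ ^ 2 := by positivity
  have hinv : (τ ^ 2 • (1 : Matrix (Fin n) (Fin n) ℝ))⁻¹ = (τ ^ 2)⁻¹ • 1 := by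
    simpa using smul_matrix_inv (A := (1 : Matrix (Fin n) (Fin n) ℝ)) (by simp) hτ2.ne'
  unfold gaussDensity oneD
  rw [hinv, Matrix.det_smul, Matrix.det_one, Fintype.card_fin, mul_one]
  have hquad : ζ ⬝ᵥ ((τ ^ 2)⁻¹ • (1 : Matrix (Fin n) (Fin n) ℝ)).mulVec ζ
      = (τ ^ 2)⁻¹ * ∑ j, ζ j ^ 2 := by
    rw [Matrix.smul_mulVec, Matrix.one_mulVec, dotProduct_smul, smul_eq_mul]
    congr 1
    simp only [dotProduct]
    exact Finset.sum_congr rfl fun j _ => (sq (ζ j)).symm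
  rw [hquad]
  have hconst : (Real.sqrt ((2 * Real.pi) ^ n * (τ ^ 2) ^ n))⁻¹
      = ∏ _j : Fin n, (Real.sqrt (2 * Real.pi * τ ^ 2))⁻¹ := by
    rw [← mul_pow, sqrt_pow_nat (by positivity), Finset.prod_const, Finset.card_univ,
      Fintype.card_fin, inv_pow]
  have hexp : Real.exp (-((τ ^ 2)⁻¹ * ∑ j, ζ j ^ 2) / 2)
      = ∏ j, Real.exp (-(2 * τ ^ 2)⁻¹ * ζ j ^ 2) := by
    rw [← Real.exp_sum]
    congr 1
    rw [Finset.mul_sum, neg_div, Finset.sum_div, ← Finset.sum_neg_distrib]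
    exact Finset.sum_congr rfl fun j _ => by rw [mul_inv]; ring
  rw [hconst, hexp, ← Finset.prod_mul_distrib]

lemma quad_continuous (ζ : Fin n → ℝ) :
    Continuous fun M : Matrix (Fin n) (Fin n) ℝ => ζ ⬝ᵥ M.mulVec ζ := by
  simp only [Matrix.mulVec, dotProduct]
  exact continuous_finset_sum _ fun i _ => continuous_const.mul <|
    continuous_finset_sum _ fun j _ =>
      (Continuous.matrix_elem continuous_id i j).mul continuous_const

lemma gaussDensity_tendsto {τ : ℝ} (hτ : 0 < τ) {B : ℕ → Matrix (Fin n) (Fin n) ℝ}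
    (hBt : Tendsto B atTop (𝓝 (τ ^ 2 • (1 : Matrix (Fin n) (Fin n) ℝ)))) (ζ : Fin n → ℝ) :
    Tendsto (fun p => gaussDensity (B p) ζ) atTop
      (𝓝 (gaussDensity (τ ^ 2 • (1 : Matrix (Fin n) (Fin n) ℝ)) ζ)) := by
  set L : Matrix (Fin n) (Fin n) ℝ := τ ^ 2 • 1 with hL
  have hdetL : L.det = (τ ^ 2) ^ n := by
    rw [hL, Matrix.det_smul, Matrix.det_one, Fintype.card_fin, mul_one]
  have hdet_pos : 0 < L.det := by rw [hdetL]; positivity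
  have h1 : Tendsto (fun p => (B p).det) atTop (𝓝 L.det) :=
    (Continuous.matrix_det continuous_id).continuousAt.tendsto.comp hBt
  have hRinv : ContinuousAt Ring.inverse L.det := by
    rw [Ring.inverse_eq_inv']
    exact continuousAt_inv₀ hdet_pos.ne'
  have h2 : Tendsto (fun p => (B p)⁻¹) atTop (𝓝 L⁻¹) :=
    (continuousAt_matrix_inv L hRinv).tendsto.comp hBt
  have h3 : Tendsto (fun p => ζ ⬝ᵥ ((B p)⁻¹).mulVec ζ) atTop (𝓝 (ζ ⬝ᵥ L⁻¹.mulVec ζ)) :=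
    ((quad_continuous ζ).continuousAt).tendsto.comp h2
  have hsq_pos : 0 < Real.sqrt ((2 * Real.pi) ^ n * L.det) :=
    Real.sqrt_pos.2 (by positivity)
  exact ((Real.continuous_sqrt.continuousAt.tendsto.comp
      (h1.const_mul ((2 * Real.pi) ^ n))).inv₀ hsq_pos.ne').mul
    (Real.continuous_exp.continuousAt.tendsto.comp ((h3.neg).div_const 2))

lemma sqrt_tendsto_atTop : Tendsto Real.sqrt atTop atTop := by
  refine tendsto_atTop_atTop.2 fun b => ⟨b ^ 2, fun x hx => ?_⟩
  calc b ≤ |b| := le_abs_self b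
    _ = Real.sqrt (b ^ 2) := (Real.sqrt_sq_eq_abs b).symm
    _ ≤ Real.sqrt x := Real.sqrt_le_sqrt hx

end Thm5b

/-- **Fatou lower bound of Theorem 5(b).** If each `gⱼ` is bounded with limits `aⱼ`
at `−∞` and `bⱼ` at `+∞`, `sₚ → ∞` and `Bₚ → τ²Iₙ` entrywise, then
`liminf_p ∫ ∏ⱼ gⱼ(ηⱼ) φ_{sₚBₚ}(η) dη ≥ ∏ⱼ (aⱼ + bⱼ)/2`. -/
theorem marginal_likelihood_liminf_bound
    (n : ℕ) (hn : 1 ≤ n) (τ : ℝ) (hτ : 0 < τ)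
    (g : Fin n → ℝ → ℝ)
    (hgm : ∀ j, Measurable (g j)) (hg0 : ∀ j t, 0 ≤ g j t)
    (hgb : ∀ j, ∃ B, ∀ t, g j t ≤ B)
    (a b : Fin n → ℝ) (ha0 : ∀ j, 0 ≤ a j) (hb0 : ∀ j, 0 ≤ b j)
    (ha : ∀ j, Tendsto (g j) atBot (𝓝 (a j)))
    (hb : ∀ j, Tendsto (g j) atTop (𝓝 (b j)))
    (s : ℕ → ℝ) (hs : ∀ p, 0 < s p) (hsdiv : Tendsto s atTop atTop)
    (B : ℕ → Matrix (Fin n) (Fin n) ℝ) (hB : ∀ p, (B p).PosDef)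
    (hBc : ∀ x y, Tendsto (fun p => B p x y) atTop
      (𝓝 ((τ ^ 2 • (1 : Matrix (Fin n) (Fin n) ℝ)) x y))) :
    ENNReal.ofReal (∏ j, (a j + b j) / 2) ≤
      Filter.liminf (fun p => ∫⁻ η : Fin n → ℝ,
        ENNReal.ofReal ((∏ j, g j (η j)) * gaussDensity (s p • B p) η)) atTop := by
  classical
  set F : ℕ → (Fin n → ℝ) → ℝ≥0∞ := fun p ζ =>
    ENNReal.ofReal ((∏ j, g j (Real.sqrt (s p) * ζ j)) * gaussDensity (B p) ζ) with hF
  have hFmeas : ∀ p, Measurable (F p) := fun p =>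
    ((Finset.measurable_prod _ fun j _ =>
        (hgm j).comp ((measurable_pi_apply j).const_mul _)).mul
      (Thm5b.gaussDensity_measurable (B p))).ennreal_ofReal
  -- Step 1: change of variables η = √(s p) • ζ
  have key : ∀ p, (∫⁻ η : Fin n → ℝ,
      ENNReal.ofReal ((∏ j, g j (η j)) * gaussDensity (s p • B p) η)) = ∫⁻ ζ, F p ζ := by
    intro p
    have hcpos : 0 < Real.sqrt (s p) := Real.sqrt_pos.2 (hs p)
    have hcn : (0:ℝ) < Real.sqrt (s p) ^ n := pow_pos hcpos n
    have hmeas2 : Measurable fun ζ : Fin n → ℝ => ENNReal.ofReal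
        ((∏ j, g j ((Real.sqrt (s p) • ζ) j))
          * gaussDensity (s p • B p) (Real.sqrt (s p) • ζ)) :=
      (Thm5b.integrand_measurable hgm _).comp (measurable_const_smul _)
    rw [Thm5b.lintegral_comp_const_smul _ (Thm5b.integrand_measurable hgm _) hcpos,
      ← lintegral_const_mul _ hmeas2]
    refine lintegral_congr fun ζ => ?_
    have hgd := Thm5b.gaussDensity_smul (hB p) (hs p) ζ
    simp only [Pi.smul_apply, smul_eq_mul, hF]
    rw [hgd, ← ENNReal.ofReal_mul hcn.le]
    congr 1
    field_simp
  -- Step 2: a.e. pointwise convergence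
  have hBt : Tendsto B atTop (𝓝 (τ ^ 2 • (1 : Matrix (Fin n) (Fin n) ℝ))) := by
    refine tendsto_pi_nhds.2 ?_
    intro i
    rw [tendsto_pi_nhds]
    intro j
    exact hBc i j
  have hae : ∀ᵐ ζ : Fin n → ℝ, ∀ j, ζ j ≠ 0 :=
    ae_all_iff.2 fun j => by
      rw [volume_pi]
      exact Measure.ae_eval_ne _ j 0
  have hpt : ∀ᵐ ζ : Fin n → ℝ, Tendsto (fun p => F p ζ) atTop
      (𝓝 (ENNReal.ofReal (∏ j, Thm5b.qfun (a j) (b j) τ (ζ j)))) := by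
    filter_upwards [hae] with ζ hζ
    have hdens := Thm5b.gaussDensity_tendsto hτ hBt ζ
    have hsq : Tendsto (fun p => Real.sqrt (s p)) atTop atTop :=
      Thm5b.sqrt_tendsto_atTop.comp hsdiv
    have hgj : ∀ j, Tendsto (fun p => g j (Real.sqrt (s p) * ζ j)) atTop
        (𝓝 (if ζ j < 0 then a j else b j)) := by
      intro j
      rcases (hζ j).lt_or_gt with h | h
      · rw [if_pos h]
        exact (ha j).comp ((tendsto_mul_const_atBot_of_neg h).2 hsq)
      · rw [if_neg (not_lt.2 h.le)]
        exact (hb j).comp (hsq.atTop_mul_const h)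
    have hprod : Tendsto (fun p => ∏ j, g j (Real.sqrt (s p) * ζ j)) atTop
        (𝓝 (∏ j, if ζ j < 0 then a j else b j)) :=
      tendsto_finset_prod _ fun j _ => hgj j
    have hval : (∏ j, if ζ j < 0 then a j else b j)
        * gaussDensity (τ ^ 2 • (1 : Matrix (Fin n) (Fin n) ℝ)) ζ
        = ∏ j, Thm5b.qfun (a j) (b j) τ (ζ j) := by
      rw [Thm5b.gaussDensity_prod hτ, ← Finset.prod_mul_distrib]
      rfl
    have hlim := (ENNReal.continuous_ofReal.continuousAt.tendsto).comp (hprod.mul hdens)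
    rw [hval] at hlim
    exact hlim
  -- Step 3: value of the limit integral
  have hq_value : (∫⁻ ζ : Fin n → ℝ,
      ENNReal.ofReal (∏ j, Thm5b.qfun (a j) (b j) τ (ζ j)))
      = ENNReal.ofReal (∏ j, (a j + b j) / 2) := by
    rw [volume_pi, ← MeasureTheory.ofReal_integral_eq_lintegral_ofReal
        (Integrable.fin_nat_prod fun j => Thm5b.qfun_integrable hτ)
        (Filter.Eventually.of_forall fun ζ => Finset.prod_nonneg fun j _ =>
          Thm5b.qfun_nonneg (ha0 j) (hb0 j) _),
      MeasureTheory.integral_fin_nat_prod_eq_prod]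
    congr 1
    exact Finset.prod_congr rfl fun j _ => Thm5b.qfun_integral hτ (ha0 j) (hb0 j)
  -- Step 4: Fatou
  have heq : (∫⁻ ζ : Fin n → ℝ,
      ENNReal.ofReal (∏ j, Thm5b.qfun (a j) (b j) τ (ζ j)))
      = ∫⁻ ζ, liminf (fun p => F p ζ) atTop :=
    lintegral_congr_ae (hpt.mono fun ζ h => h.liminf_eq.symm)
  calc ENNReal.ofReal (∏ j, (a j + b j) / 2)
      = ∫⁻ ζ : Fin n → ℝ,
        ENNReal.ofReal (∏ j, Thm5b.qfun (a j) (b j) τ (ζ j)) := hq_value.symm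
    _ = ∫⁻ ζ, liminf (fun p => F p ζ) atTop := heq
    _ ≤ liminf (fun p => ∫⁻ ζ, F p ζ) atTop := lintegral_liminf_le hFmeas
    _ = liminf (fun p => ∫⁻ η : Fin n → ℝ,
        ENNReal.ofReal ((∏ j, g j (η j)) * gaussDensity (s p • B p) η)) atTop := by
      rw [show (fun p => ∫⁻ ζ, F p ζ) = fun p => ∫⁻ η : Fin n → ℝ,
        ENNReal.ofReal ((∏ j, g j (η j)) * gaussDensity (s p • B p) η) from
        funext fun p => (key p).symm]
end
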